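/- arXiv:2310.06250 — 8 statements merged into one kernel-verified Lean document; each statement's English description precedes it below -/
import Mathlib

section
/- With J as above, the function c ↦ Λ(λ(c), c) = ∫ J(y) e^{λ(c) y} dy − 1 − c λ(c) (where λ(c) is the minimizer of Λ(·, c) on (0, ∞)) is continuously differentiable on (0, ∞) with derivative d/dc Λ(λ(c), c) = −λ(c) < 0; hence c ↦ Λ(λ(c), c) is strictly decreasing. -/
open MeasureTheory Filter Set
open Topology

lemma stmt2_abs_le (y : ℝ) : |y| ≤ Real.exp y + Real.exp (-y) := by
  rcases abs_cases y with ⟨h, _⟩ | ⟨h, _⟩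
  · nlinarith [Real.add_one_le_exp y, Real.exp_pos (-y)]
  · nlinarith [Real.add_one_le_exp (-y), Real.exp_pos y]

lemma stmt2_exp_le (x l y : ℝ) (hx : |x - l| ≤ 1) :
    Real.exp (x * y) ≤ Real.exp ((l + 1) * y) + Real.exp ((l - 1) * y) := by
  rcases abs_le.1 hx with ⟨h1, h2⟩
  rcases le_or_gt 0 y with hy | hy
  · have : x * y ≤ (l + 1) * y := by nlinarith
    nlinarith [Real.exp_le_exp.2 this, Real.exp_pos ((l - 1) * y)]
  · have : x * y ≤ (l - 1) * y := by nlinarith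
    nlinarith [Real.exp_le_exp.2 this, Real.exp_pos ((l + 1) * y)]

lemma stmt2_intJ (J : ℝ → ℝ) (hJint : ∫ x, J x = 1) : Integrable J := by
  by_contra h
  rw [integral_undef h] at hJint
  norm_num at hJint

lemma stmt2_intExp (J : ℝ → ℝ) (hJsym : ∀ x, J (-x) = J x) (hJint : ∫ x, J x = 1)
    (hJexp : ∀ l : ℝ, 0 < l → Integrable (fun x => J x * Real.exp (l * x))) (m : ℝ) :
    Integrable (fun x => J x * Real.exp (m * x)) := by
  rcases lt_trichotomy m 0 with hm | hm | hm
  · have h1 : Integrable (fun x => J x * Real.exp (-m * x)) := hJexp _ (by linarith)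
    have h2 := h1.comp_neg
    have : (fun x => J (-x) * Real.exp (-m * -x)) = fun x => J x * Real.exp (m * x) := by
      funext x; rw [hJsym]; ring_nf
    rwa [this] at h2
  · simpa [hm] using stmt2_intJ J hJint
  · exact hJexp m hm

lemma stmt2_intExpMul (J : ℝ → ℝ) (hJc : Continuous J) (hJnn : ∀ x, 0 ≤ J x)
    (hJsym : ∀ x, J (-x) = J x) (hJint : ∫ x, J x = 1)
    (hJexp : ∀ l : ℝ, 0 < l → Integrable (fun x => J x * Real.exp (l * x))) (m : ℝ) :
    Integrable (fun x => J x * Real.exp (m * x) * x) := by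
  have hint : Integrable (fun x => J x * Real.exp ((m + 1) * x) + J x * Real.exp ((m - 1) * x)) :=
    (stmt2_intExp J hJsym hJint hJexp (m + 1)).add (stmt2_intExp J hJsym hJint hJexp (m - 1))
  refine hint.mono' ?_ ?_
  · exact ((hJc.mul ((continuous_const.mul continuous_id).rexp)).mul continuous_id).aestronglyMeasurable
  · refine Filter.Eventually.of_forall fun x => ?_
    have h1 : |x| ≤ Real.exp x + Real.exp (-x) := stmt2_abs_le x
    have h2 : 0 ≤ J x * Real.exp (m * x) := mul_nonneg (hJnn x) (Real.exp_pos _).le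
    have : ‖J x * Real.exp (m * x) * x‖ = J x * Real.exp (m * x) * |x| := by
      rw [Real.norm_eq_abs, abs_mul, abs_of_nonneg h2]
    rw [this]
    calc J x * Real.exp (m * x) * |x| ≤ J x * Real.exp (m * x) * (Real.exp x + Real.exp (-x)) :=
          mul_le_mul_of_nonneg_left h1 h2
      _ = J x * Real.exp ((m + 1) * x) + J x * Real.exp ((m - 1) * x) := by
          simp only [mul_add, add_mul, mul_assoc, ← Real.exp_add]; ring_nf

lemma stmt2_hasDerivG (J : ℝ → ℝ) (hJc : Continuous J) (hJnn : ∀ x, 0 ≤ J x)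
    (hJsym : ∀ x, J (-x) = J x) (hJint : ∫ x, J x = 1)
    (hJexp : ∀ l : ℝ, 0 < l → Integrable (fun x => J x * Real.exp (l * x))) (l : ℝ) :
    HasDerivAt (fun l' => ∫ y, J y * Real.exp (l' * y))
      (∫ y, J y * Real.exp (l * y) * y) l := by
  set bound : ℝ → ℝ := fun y =>
    J y * Real.exp ((l + 2) * y) + 2 * (J y * Real.exp (l * y)) + J y * Real.exp ((l - 2) * y)
    with hbound
  have key := hasDerivAt_integral_of_dominated_loc_of_deriv_le (μ := volume) (x₀ := l)
    (F := fun l' y => J y * Real.exp (l' * y)) (F' := fun l' y => J y * Real.exp (l' * y) * y)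
    (bound := bound) (s := Metric.ball l 1) (Metric.ball_mem_nhds l one_pos)
    (Filter.Eventually.of_forall fun x =>
      (hJc.mul ((continuous_const.mul continuous_id).rexp)).aestronglyMeasurable)
    (stmt2_intExp J hJsym hJint hJexp l)
    (((hJc.mul ((continuous_const.mul continuous_id).rexp)).mul continuous_id).aestronglyMeasurable)
    ?_ ?_ ?_
  · exact key.2
  · refine Filter.Eventually.of_forall fun y => fun x hx => ?_
    have hx' : |x - l| ≤ 1 := le_of_lt (by simpa [Real.dist_eq] using Metric.mem_ball.1 hx)
    have h1 : |y| ≤ Real.exp y + Real.exp (-y) := stmt2_abs_le y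
    have h2 : Real.exp (x * y) ≤ Real.exp ((l + 1) * y) + Real.exp ((l - 1) * y) :=
      stmt2_exp_le x l y hx'
    have hJy := hJnn y
    have : ‖J y * Real.exp (x * y) * y‖ = J y * (Real.exp (x * y) * |y|) := by
      rw [Real.norm_eq_abs, abs_mul, abs_mul, abs_of_nonneg hJy,
        abs_of_nonneg (Real.exp_pos _).le, mul_assoc]
    rw [this, hbound]
    have hprod : Real.exp (x * y) * |y| ≤
        (Real.exp ((l + 1) * y) + Real.exp ((l - 1) * y)) * (Real.exp y + Real.exp (-y)) :=
      mul_le_mul h2 h1 (abs_nonneg y)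
        (by positivity)
    calc J y * (Real.exp (x * y) * |y|)
        ≤ J y * ((Real.exp ((l + 1) * y) + Real.exp ((l - 1) * y)) *
            (Real.exp y + Real.exp (-y))) := mul_le_mul_of_nonneg_left hprod hJy
      _ = J y * Real.exp ((l + 2) * y) + 2 * (J y * Real.exp (l * y)) +
            J y * Real.exp ((l - 2) * y) := by
          simp only [mul_add, add_mul, mul_assoc, ← Real.exp_add]; ring_nf
  · rw [hbound]
    exact (((stmt2_intExp J hJsym hJint hJexp (l + 2)).add
      ((stmt2_intExp J hJsym hJint hJexp l).const_mul 2)).add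
      (stmt2_intExp J hJsym hJint hJexp (l - 2)))
  · refine Filter.Eventually.of_forall fun y => fun x _ => ?_
    have h : HasDerivAt (fun x : ℝ => Real.exp (x * y)) (Real.exp (x * y) * y) x := by
      simpa using ((hasDerivAt_id x).mul_const y).exp
    have := h.const_mul (J y)
    rw [mul_assoc]
    exact this

lemma stmt2_G1mono (J : ℝ → ℝ) (hJc : Continuous J) (hJnn : ∀ x, 0 ≤ J x)
    (hJsym : ∀ x, J (-x) = J x) (hJint : ∫ x, J x = 1)
    (hJexp : ∀ l : ℝ, 0 < l → Integrable (fun x => J x * Real.exp (l * x)))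
    {a b : ℝ} (hab : a < b) :
    (∫ y, J y * Real.exp (a * y) * y) < ∫ y, J y * Real.exp (b * y) * y := by
  have hia := stmt2_intExpMul J hJc hJnn hJsym hJint hJexp a
  have hib := stmt2_intExpMul J hJc hJnn hJsym hJint hJexp b
  have hdiff : (∫ y, J y * Real.exp (b * y) * y) - ∫ y, J y * Real.exp (a * y) * y =
      ∫ y, (J y * Real.exp (b * y) * y - J y * Real.exp (a * y) * y) :=
    (integral_sub hib hia).symm
  have hnn : ∀ y, 0 ≤ J y * Real.exp (b * y) * y - J y * Real.exp (a * y) * y := by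
    intro y
    have key : 0 ≤ J y * ((Real.exp (b * y) - Real.exp (a * y)) * y) := by
      rcases le_or_gt 0 y with hy | hy
      · exact mul_nonneg (hJnn y) (mul_nonneg
          (sub_nonneg.2 (Real.exp_le_exp.2 (by nlinarith))) hy)
      · exact mul_nonneg (hJnn y) (mul_nonneg_of_nonpos_of_nonpos
          (sub_nonpos.2 (Real.exp_le_exp.2 (by nlinarith))) hy.le)
    nlinarith [key]
  -- find a point where J is positive
  have hex : ∃ x₀, 0 < J x₀ := by
    by_contra h
    push_neg at h
    have : J = fun _ => 0 := funext fun x => le_antisymm (h x) (hJnn x)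
    rw [this] at hJint
    simp at hJint
  obtain ⟨x₀, hx₀⟩ := hex
  have hU : IsOpen {y : ℝ | 0 < J y} := isOpen_lt continuous_const hJc
  -- a nonzero point where J is positive
  have hz : ∃ z : ℝ, 0 < J z ∧ z ≠ 0 := by
    rcases eq_or_ne x₀ 0 with h0 | h0
    · rcases Metric.isOpen_iff.1 hU x₀ hx₀ with ⟨r, hr, hball⟩
      refine ⟨x₀ + r / 2, hball ?_, by rw [h0, zero_add]; positivity⟩
      rw [Metric.mem_ball, Real.dist_eq]
      have he : x₀ + r / 2 - x₀ = r / 2 := by ring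
      rw [he, abs_of_pos (by positivity)]
      linarith
    · exact ⟨x₀, hx₀, h0⟩
  obtain ⟨z, hz1, hz2⟩ := hz
  have hpos : 0 < ∫ y, (J y * Real.exp (b * y) * y - J y * Real.exp (a * y) * y) := by
    rw [integral_pos_iff_support_of_nonneg hnn (hib.sub hia)]
    have hopen : IsOpen ({y : ℝ | 0 < J y} \ {0}) := hU.sdiff isClosed_singleton
    refine lt_of_lt_of_le (hopen.measure_pos volume ⟨z, hz1, hz2⟩) (measure_mono ?_)
    rintro y ⟨hy1, hy2⟩
    simp only [Function.mem_support]
    have hyne : (y : ℝ) ≠ 0 := hy2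
    have hJy : 0 < J y := hy1
    have key : 0 < J y * ((Real.exp (b * y) - Real.exp (a * y)) * y) := by
      rcases lt_or_gt_of_ne hyne with hy | hy
      · exact mul_pos hJy (mul_pos_of_neg_of_neg
          (sub_neg.2 (Real.exp_lt_exp.2 (by nlinarith))) hy)
      · exact mul_pos hJy (mul_pos
          (sub_pos.2 (Real.exp_lt_exp.2 (by nlinarith))) hy)
    intro hcontra
    nlinarith [key, hcontra]
  linarith [hdiff ▸ hpos]

lemma stmt2_min (J : ℝ → ℝ) (hJc : Continuous J) (hJnn : ∀ x, 0 ≤ J x)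
    (hJsym : ∀ x, J (-x) = J x) (hJint : ∫ x, J x = 1)
    (hJexp : ∀ l : ℝ, 0 < l → Integrable (fun x => J x * Real.exp (l * x)))
    {c lc : ℝ} (hlc : (∫ y, J y * Real.exp (lc * y) * y) = c) (μ : ℝ) :
    (∫ y, J y * Real.exp (lc * y)) - c * lc ≤ (∫ y, J y * Real.exp (μ * y)) - c * μ := by
  set G : ℝ → ℝ := fun l => ∫ y, J y * Real.exp (l * y) with hGdef
  set G₁ : ℝ → ℝ := fun l => ∫ y, J y * Real.exp (l * y) * y with hG1def
  have hG : ∀ l, HasDerivAt G (G₁ l) l := fun l =>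
    stmt2_hasDerivG J hJc hJnn hJsym hJint hJexp l
  rcases lt_trichotomy μ lc with h | h | h
  · obtain ⟨ξ, hξ, heq⟩ := exists_hasDerivAt_eq_slope G G₁ h
      (fun x _ => (hG x).continuousAt.continuousWithinAt) (fun x _ => hG x)
    have hlt : G₁ ξ < c := hlc ▸ stmt2_G1mono J hJc hJnn hJsym hJint hJexp hξ.2
    rw [heq] at hlt
    rw [div_lt_iff₀ (by linarith : (0:ℝ) < lc - μ)] at hlt
    show G lc - c * lc ≤ G μ - c * μ
    nlinarith
  · rw [h]
  · obtain ⟨ξ, hξ, heq⟩ := exists_hasDerivAt_eq_slope G G₁ h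
      (fun x _ => (hG x).continuousAt.continuousWithinAt) (fun x _ => hG x)
    have hlt : c < G₁ ξ := hlc ▸ stmt2_G1mono J hJc hJnn hJsym hJint hJexp hξ.1
    rw [heq] at hlt
    rw [lt_div_iff₀ (by linarith : (0:ℝ) < μ - lc)] at hlt
    show G lc - c * lc ≤ G μ - c * μ
    nlinarith

lemma stmt2_lamCont (J : ℝ → ℝ) (hJc : Continuous J) (hJnn : ∀ x, 0 ≤ J x)
    (hJsym : ∀ x, J (-x) = J x) (hJint : ∫ x, J x = 1)
    (hJexp : ∀ l : ℝ, 0 < l → Integrable (fun x => J x * Real.exp (l * x)))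
    (lamf : ℝ → ℝ) (hlamf : ∀ c : ℝ, 0 < c → 0 < lamf c ∧
      (∫ y, J y * Real.exp (lamf c * y) * y) = c)
    {c₀ : ℝ} (hc₀ : 0 < c₀) : ContinuousAt lamf c₀ := by
  set G₁ : ℝ → ℝ := fun l => ∫ y, J y * Real.exp (l * y) * y with hG1def
  have hmono : ∀ {a b : ℝ}, a < b → G₁ a < G₁ b := fun h =>
    stmt2_G1mono J hJc hJnn hJsym hJint hJexp h
  obtain ⟨hl0pos, hl0⟩ := hlamf c₀ hc₀
  rw [ContinuousAt]
  refine tendsto_order.2 ⟨?_, ?_⟩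
  · intro a ha
    have h1 : G₁ a < c₀ := hl0 ▸ hmono ha
    have hset : IsOpen (Ioi (G₁ a) ∩ Ioi (0:ℝ)) := isOpen_Ioi.inter isOpen_Ioi
    have hmem : c₀ ∈ Ioi (G₁ a) ∩ Ioi (0:ℝ) := ⟨h1, hc₀⟩
    filter_upwards [hset.mem_nhds hmem] with c hc
    obtain ⟨hc1, hc2⟩ := hc
    obtain ⟨hlpos, hl⟩ := hlamf c hc2
    have hGl : G₁ (lamf c) = c := hl
    by_contra hcon
    push_neg at hcon
    have hle : G₁ (lamf c) ≤ G₁ a := by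
      rcases eq_or_lt_of_le hcon with he | hlt
      · rw [he]
      · exact (hmono hlt).le
    rw [hGl] at hle
    exact absurd hc1 (not_lt.2 hle)
  · intro b hb
    have h1 : c₀ < G₁ b := hl0 ▸ hmono hb
    have hset : IsOpen (Iio (G₁ b) ∩ Ioi (0:ℝ)) := isOpen_Iio.inter isOpen_Ioi
    have hmem : c₀ ∈ Iio (G₁ b) ∩ Ioi (0:ℝ) := ⟨h1, hc₀⟩
    filter_upwards [hset.mem_nhds hmem] with c hc
    obtain ⟨hc1, hc2⟩ := hc
    obtain ⟨hlpos, hl⟩ := hlamf c hc2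
    have hGl : G₁ (lamf c) = c := hl
    by_contra hcon
    push_neg at hcon
    have hle : G₁ b ≤ G₁ (lamf c) := by
      rcases eq_or_lt_of_le hcon with he | hlt
      · rw [he]
      · exact (hmono hlt).le
    rw [hGl] at hle
    exact absurd hc1 (not_lt.2 hle)

theorem stmt_2 (J : ℝ → ℝ) (hJc : Continuous J) (hJnn : ∀ x, 0 ≤ J x)
    (hJsym : ∀ x, J (-x) = J x) (hJint : ∫ x, J x = 1)
    (hJexp : ∀ l : ℝ, 0 < l → Integrable (fun x => J x * Real.exp (l * x)))
    (lamf : ℝ → ℝ) (hlamf : ∀ c : ℝ, 0 < c → 0 < lamf c ∧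
      (∫ y, J y * Real.exp (lamf c * y) * y) = c) :
    (∀ c : ℝ, 0 < c →
      HasDerivAt (fun c' : ℝ => (∫ y, J y * Real.exp (lamf c' * y)) - 1 - c' * lamf c')
        (-(lamf c)) c ∧ -(lamf c) < 0) ∧
    ContinuousOn (fun c' : ℝ => -(lamf c')) (Set.Ioi 0) ∧
    StrictAntiOn (fun c' : ℝ => (∫ y, J y * Real.exp (lamf c' * y)) - 1 - c' * lamf c')
      (Set.Ioi 0) := by
  have hcont : ∀ {c₀ : ℝ}, 0 < c₀ → ContinuousAt lamf c₀ := fun h =>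
    stmt2_lamCont J hJc hJnn hJsym hJint hJexp lamf hlamf h
  have hder : ∀ c : ℝ, 0 < c →
      HasDerivAt (fun c' : ℝ => (∫ y, J y * Real.exp (lamf c' * y)) - 1 - c' * lamf c')
        (-(lamf c)) c := by
    intro c hc
    obtain ⟨hlc, hGc⟩ := hlamf c hc
    rw [hasDerivAt_iff_tendsto]
    have htend : Tendsto (fun c' => |lamf c' - lamf c|) (𝓝 c) (𝓝 0) := by
      have h1 : Tendsto lamf (𝓝 c) (𝓝 (lamf c)) := hcont hc
      have h2 := (h1.sub_const (lamf c)).abs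
      simpa using h2
    refine squeeze_zero' (Filter.Eventually.of_forall fun c' => by positivity) ?_ htend
    filter_upwards [isOpen_Ioi.mem_nhds hc] with c' hc'
    obtain ⟨hlc', hGc'⟩ := hlamf c' hc'
    have h1 := stmt2_min J hJc hJnn hJsym hJint hJexp hGc' (lamf c)
    have h2 := stmt2_min J hJc hJnn hJsym hJint hJexp hGc (lamf c')
    set A := (∫ y, J y * Real.exp (lamf c' * y)) with hA
    set B := (∫ y, J y * Real.exp (lamf c * y)) with hB
    set D := (A - 1 - c' * lamf c') - (B - 1 - c * lamf c) - (c' - c) * (-(lamf c)) with hD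
    have hup : D ≤ 0 := by rw [hD]; linarith
    have hlow : (c' - c) * (lamf c - lamf c') ≤ D := by rw [hD]; linarith
    have e1 : -(|c' - c| * |lamf c' - lamf c|) ≤ (c' - c) * (lamf c - lamf c') := by
      have h := neg_abs_le ((c' - c) * (lamf c - lamf c'))
      rw [abs_mul, abs_sub_comm (lamf c) (lamf c')] at h
      exact h
    have key : |D| ≤ |c' - c| * |lamf c' - lamf c| := by
      rw [abs_le]
      constructor
      · linarith
      · have : (0:ℝ) ≤ |c' - c| * |lamf c' - lamf c| :=
          mul_nonneg (abs_nonneg _) (abs_nonneg _)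
        linarith
    show ‖c' - c‖⁻¹ * ‖(A - 1 - c' * lamf c') - (B - 1 - c * lamf c) -
        (c' - c) • (-(lamf c))‖ ≤ |lamf c' - lamf c|
    rw [smul_eq_mul, Real.norm_eq_abs, Real.norm_eq_abs]
    rcases eq_or_ne c' c with he | hne
    · subst he
      simp
    · have habs : 0 < |c' - c| := abs_pos.2 (sub_ne_zero.2 hne)
      calc |c' - c|⁻¹ * |D| ≤ |c' - c|⁻¹ * (|c' - c| * |lamf c' - lamf c|) :=
            mul_le_mul_of_nonneg_left key (by positivity)
        _ = |lamf c' - lamf c| := by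
            rw [← mul_assoc, inv_mul_cancel₀ habs.ne', one_mul]
  refine ⟨fun c hc => ⟨hder c hc, neg_neg_iff_pos.2 (hlamf c hc).1⟩, ?_, ?_⟩
  · exact fun c hc => ((hcont hc).neg).continuousWithinAt
  · refine strictAntiOn_of_deriv_neg (convex_Ioi 0)
      (fun x hx => (hder x hx).continuousAt.continuousWithinAt) (fun x hx => ?_)
    rw [interior_Ioi] at hx
    rw [(hder x hx).deriv]
    exact neg_neg_iff_pos.2 (hlamf x hx).1
end

section
/- With J as above, the minimum value Λ(λ(c), c) tends to −∞ as c → ∞. More precisely, ∫_ℝ J(y) e^{λ(c) y} dy − c λ(c) = ∫_0^∞ J(y) e^{λ(c) y} (1 − λ(c) y) dy + ∫_0^∞ J(y) e^{−λ(c) y} (1 + λ(c) y) dy → −∞ as c → ∞. -/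
open MeasureTheory Filter Set

lemma exp_mul_one_sub_le (t : ℝ) : Real.exp t * (1 - t) ≤ 1 := by
  have h : 1 - t ≤ Real.exp (-t) := by linarith [Real.add_one_le_exp (-t)]
  calc Real.exp t * (1 - t) ≤ Real.exp t * Real.exp (-t) :=
        mul_le_mul_of_nonneg_left h (Real.exp_pos t).le
    _ = 1 := by rw [← Real.exp_add]; simp

lemma integrable_mul_id (J : ℝ → ℝ) (hJc : Continuous J) (hJnn : ∀ x, 0 ≤ J x)
    (hJexp : ∀ l : ℝ, 0 < l → Integrable (fun x => J x * Real.exp (l * x)))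
    {l : ℝ} (hl : 0 < l) :
    Integrable (fun y => J y * Real.exp (l * y) * y) := by
  have h1 := hJexp (3 * l / 2) (by linarith)
  have h2 := hJexp (l / 2) (by linarith)
  have hg : Integrable (fun y => (2 / l) *
      (J y * Real.exp (3 * l / 2 * y) + J y * Real.exp (l / 2 * y))) := (h1.add h2).const_mul _
  refine hg.mono' ?_ ?_
  · exact ((hJc.mul (Real.continuous_exp.comp (continuous_const.mul continuous_id'))).mul
      continuous_id').aestronglyMeasurable
  · filter_upwards with y
    have habs : l / 2 * |y| ≤ Real.exp (l / 2 * y) + Real.exp (-(l / 2 * y)) := by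
      have e1 := Real.add_one_le_exp (l / 2 * y)
      have e2 := Real.add_one_le_exp (-(l / 2 * y))
      have p1 := Real.exp_pos (l / 2 * y)
      have p2 := Real.exp_pos (-(l / 2 * y))
      rcases abs_cases y with ⟨h, _⟩ | ⟨h, _⟩ <;> rw [h] <;> nlinarith
    have key : |y| ≤ 2 / l * (Real.exp (l / 2 * y) + Real.exp (-(l / 2 * y))) := by
      have h2l : (0:ℝ) < 2 / l := by positivity
      calc |y| = 2 / l * (l / 2 * |y|) := by field_simp
        _ ≤ _ := mul_le_mul_of_nonneg_left habs h2l.le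
    have h3 : Real.exp (l * y) * Real.exp (l / 2 * y) = Real.exp (3 * l / 2 * y) := by
      rw [← Real.exp_add]; ring_nf
    have h4 : Real.exp (l * y) * Real.exp (-(l / 2 * y)) = Real.exp (l / 2 * y) := by
      rw [← Real.exp_add]; ring_nf
    rw [Real.norm_eq_abs, abs_mul, abs_mul, abs_of_nonneg (hJnn y),
      abs_of_nonneg (Real.exp_pos _).le]
    calc J y * Real.exp (l * y) * |y|
        ≤ J y * Real.exp (l * y) * (2 / l * (Real.exp (l / 2 * y) + Real.exp (-(l / 2 * y)))) :=
          mul_le_mul_of_nonneg_left key (mul_nonneg (hJnn y) (Real.exp_pos _).le)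
      _ = 2 / l * (J y * (Real.exp (l * y) * Real.exp (l / 2 * y))
            + J y * (Real.exp (l * y) * Real.exp (-(l / 2 * y)))) := by ring
      _ = 2 / l * (J y * Real.exp (3 * l / 2 * y) + J y * Real.exp (l / 2 * y)) := by
          rw [h3, h4]

lemma main_bound (J : ℝ → ℝ) (hJnn : ∀ x, 0 ≤ J x) (hJInt : Integrable J)
    (hJint : ∫ x, J x = 1)
    {l a b m : ℝ} (hl : 0 < l) (ha : 0 < a) (hab : a < b) (hla : 2 ≤ l * a)
    (hm : 0 < m) (hJm : ∀ y ∈ Icc a b, m ≤ J y)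
    (hfint : Integrable (fun y => J y * Real.exp (l * y) * (1 - l * y))) :
    (∫ y, J y * Real.exp (l * y) * (1 - l * y)) ≤ 1 - (b - a) * (m * Real.exp (l * a)) := by
  have hsplit := integral_add_compl (s := Icc a b) measurableSet_Icc hfint
  have hconst : (∫ _ in Icc a b, (-(m * Real.exp (l * a))))
      = (b - a) * (-(m * Real.exp (l * a))) := by
    rw [setIntegral_const, measureReal_def, Real.volume_Icc, ENNReal.toReal_ofReal (by linarith), smul_eq_mul]
  have hIcc : (∫ y in Icc a b, J y * Real.exp (l * y) * (1 - l * y))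
      ≤ (b - a) * (-(m * Real.exp (l * a))) := by
    rw [← hconst]
    refine setIntegral_mono_on hfint.integrableOn (integrableOn_const ?_) measurableSet_Icc ?_
    · rw [Real.volume_Icc]; exact ENNReal.ofReal_ne_top
    · intro y hy
      obtain ⟨hy1, hy2⟩ := hy
      have hly : 2 ≤ l * y := hla.trans (mul_le_mul_of_nonneg_left hy1 hl.le)
      have hexp : Real.exp (l * a) ≤ Real.exp (l * y) :=
        Real.exp_le_exp.2 (mul_le_mul_of_nonneg_left hy1 hl.le)
      have hJy := hJm y ⟨hy1, hy2⟩
      have k1 : m * Real.exp (l * a) ≤ J y * Real.exp (l * y) :=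
        mul_le_mul hJy hexp (Real.exp_pos _).le (hm.le.trans hJy)
      nlinarith [mul_nonneg (hm.le.trans hJy) (Real.exp_pos (l * y)).le]
  have hcompl : (∫ y in (Icc a b)ᶜ, J y * Real.exp (l * y) * (1 - l * y)) ≤ 1 := by
    calc (∫ y in (Icc a b)ᶜ, J y * Real.exp (l * y) * (1 - l * y))
        ≤ ∫ y in (Icc a b)ᶜ, J y := by
          refine setIntegral_mono hfint.integrableOn hJInt.integrableOn (fun y => ?_)
          nlinarith [exp_mul_one_sub_le (l * y), hJnn y, Real.exp_pos (l * y)]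
      _ ≤ ∫ y, J y := setIntegral_le_integral hJInt (ae_of_all _ hJnn)
      _ = 1 := hJint
  linarith
theorem stmt_3 (J : ℝ → ℝ) (hJc : Continuous J) (hJnn : ∀ x, 0 ≤ J x)
    (hJsym : ∀ x, J (-x) = J x) (hJint : ∫ x, J x = 1)
    (hJexp : ∀ l : ℝ, 0 < l → Integrable (fun x => J x * Real.exp (l * x)))
    (lamf : ℝ → ℝ) (hlamf : ∀ c : ℝ, 0 < c → 0 < lamf c ∧
      (∫ y, J y * Real.exp (lamf c * y) * y) = c) :
    (∀ c : ℝ, 0 < c →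
      (∫ y, J y * Real.exp (lamf c * y)) - c * lamf c =
        (∫ y in Set.Ioi (0 : ℝ), J y * Real.exp (lamf c * y) * (1 - lamf c * y)) +
        (∫ y in Set.Ioi (0 : ℝ), J y * Real.exp (-(lamf c) * y) * (1 + lamf c * y))) ∧
    Tendsto (fun c : ℝ => (∫ y, J y * Real.exp (lamf c * y)) - c * lamf c) atTop atBot := by
  have hJInt : Integrable J := by
    by_contra h
    rw [integral_undef h] at hJint
    norm_num at hJint
  have hfint : ∀ l : ℝ, 0 < l →
      Integrable (fun y => J y * Real.exp (l * y) * (1 - l * y)) := by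
    intro l hl
    have heqfun : (fun y => J y * Real.exp (l * y) * (1 - l * y))
        = fun y => J y * Real.exp (l * y) - (J y * Real.exp (l * y) * y) * l := by
      funext y; ring
    rw [heqfun]
    exact (hJexp _ hl).sub ((integrable_mul_id J hJc hJnn hJexp hl).mul_const _)
  have hident : ∀ c : ℝ, 0 < c →
      (∫ y, J y * Real.exp (lamf c * y)) - c * lamf c =
        ∫ y, J y * Real.exp (lamf c * y) * (1 - lamf c * y) := by
    intro c hc
    obtain ⟨hl, heq⟩ := hlamf c hc
    have hi1 := hJexp (lamf c) hl
    have hi2 := integrable_mul_id J hJc hJnn hJexp hl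
    have hcl : c * lamf c = ∫ y, J y * Real.exp (lamf c * y) * y * lamf c := by
      rw [integral_mul_const, heq]
    rw [hcl, ← integral_sub hi1 (hi2.mul_const _)]
    exact integral_congr_ae (Eventually.of_forall fun y => by ring)
  have hsplitId : ∀ c : ℝ, 0 < c →
      (∫ y, J y * Real.exp (lamf c * y) * (1 - lamf c * y)) =
      (∫ y in Ioi (0:ℝ), J y * Real.exp (lamf c * y) * (1 - lamf c * y)) +
      (∫ y in Ioi (0:ℝ), J y * Real.exp (-(lamf c) * y) * (1 + lamf c * y)) := by
    intro c hc
    obtain ⟨hl, heq⟩ := hlamf c hc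
    have hfi := hfint (lamf c) hl
    rw [← intervalIntegral.integral_Iic_add_Ioi hfi.integrableOn hfi.integrableOn]
    have hneg : (∫ y in Iic (0:ℝ), J y * Real.exp (lamf c * y) * (1 - lamf c * y))
        = ∫ y in Ioi (0:ℝ), J y * Real.exp (-(lamf c) * y) * (1 + lamf c * y) := by
      have hco := integral_comp_neg_Ioi (0:ℝ)
        (fun y => J y * Real.exp (lamf c * y) * (1 - lamf c * y))
      rw [neg_zero] at hco
      rw [← hco]
      refine setIntegral_congr_fun measurableSet_Ioi (fun y _ => ?_)
      show J (-y) * Real.exp (lamf c * -y) * (1 - lamf c * -y) = _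
      rw [hJsym, show lamf c * -y = -(lamf c) * y by ring]
      ring
    rw [hneg, add_comm]
  have hlam_top : Tendsto lamf atTop atTop := by
    rw [tendsto_atTop]
    intro M
    set M' := max M 1 with hM'
    have h1M : (1:ℝ) ≤ M' := le_max_right M 1
    set K := ∫ y, J y * Real.exp ((M' + 1) * y) with hK
    filter_upwards [eventually_gt_atTop (max K 0)] with c hc
    have hc0 : 0 < c := lt_of_le_of_lt (le_max_right K 0) hc
    obtain ⟨hl, heq⟩ := hlamf c hc0
    by_contra hcon
    push_neg at hcon
    have hlM : lamf c ≤ M' := hcon.le.trans (le_max_left M 1)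
    have hcK : c ≤ K := by
      rw [← heq, hK]
      refine integral_mono (integrable_mul_id J hJc hJnn hJexp hl)
        (hJexp _ (by linarith)) (fun y => ?_)
      rcases le_or_gt y 0 with hy | hy
      · have k1 : J y * Real.exp (lamf c * y) * y ≤ 0 :=
          mul_nonpos_of_nonneg_of_nonpos (mul_nonneg (hJnn y) (Real.exp_pos _).le) hy
        have k2 : 0 ≤ J y * Real.exp ((M' + 1) * y) :=
          mul_nonneg (hJnn y) (Real.exp_pos _).le
        linarith
      · have hyy : y ≤ Real.exp y := (Real.add_one_le_exp y).trans' (by linarith)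
        have hexp' : Real.exp (lamf c * y) ≤ Real.exp (M' * y) :=
          Real.exp_le_exp.2 (mul_le_mul_of_nonneg_right hlM hy.le)
        have hsum : Real.exp (M' * y) * Real.exp y = Real.exp ((M' + 1) * y) := by
          rw [← Real.exp_add]; ring_nf
        have c1 : J y * Real.exp (lamf c * y) * y ≤ J y * Real.exp (M' * y) * y :=
          mul_le_mul_of_nonneg_right (mul_le_mul_of_nonneg_left hexp' (hJnn y)) hy.le
        have c2 : J y * Real.exp (M' * y) * y ≤ J y * Real.exp (M' * y) * Real.exp y :=
          mul_le_mul_of_nonneg_left hyy (mul_nonneg (hJnn y) (Real.exp_pos _).le)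
        have c3 : J y * Real.exp (M' * y) * Real.exp y = J y * Real.exp ((M' + 1) * y) := by
          rw [mul_assoc, hsum]
        linarith
    linarith [lt_of_le_of_lt (le_max_left K 0) hc]
  have hex : ∃ p : ℝ, 0 < p ∧ 0 < J p := by
    have hx : ∃ x, 0 < J x := by
      by_contra h; push_neg at h
      have hz : J = fun _ => 0 := funext fun x => le_antisymm (h x) (hJnn x)
      rw [hz] at hJint; simp at hJint
    obtain ⟨x0, hx0⟩ := hx
    rcases lt_trichotomy x0 0 with h | h | h
    · exact ⟨-x0, by linarith, by rw [hJsym]; exact hx0⟩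
    · subst h
      obtain ⟨δ, hδ, hb⟩ := Metric.continuousAt_iff.1 (hJc.continuousAt (x := (0:ℝ)))
        (J 0 / 2) (by linarith)
      refine ⟨δ / 2, by linarith, ?_⟩
      have hd := hb (x := δ / 2) (by rw [Real.dist_eq, sub_zero, abs_of_pos (by linarith)]; linarith)
      rw [Real.dist_eq] at hd
      have := abs_lt.1 hd
      linarith [this.1]
    · exact ⟨x0, h, hx0⟩
  obtain ⟨p, hp, hJp⟩ := hex
  obtain ⟨δ, hδ, hb⟩ := Metric.continuousAt_iff.1 (hJc.continuousAt (x := p))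
    (J p / 2) (by linarith)
  set ε := min (δ / 2) (p / 2) with hε
  have hε0 : 0 < ε := lt_min (by linarith) (by linarith)
  have hεp : ε < p := lt_of_le_of_lt (min_le_right _ _) (by linarith)
  have hJm : ∀ y ∈ Icc (p - ε) (p + ε), J p / 2 ≤ J y := by
    intro y hy
    have habs : |y - p| ≤ ε := abs_le.2 ⟨by linarith [hy.1], by linarith [hy.2]⟩
    have hd : dist y p < δ := by
      rw [Real.dist_eq]
      exact habs.trans_lt (lt_of_le_of_lt (min_le_left _ _) (by linarith))
    have := abs_lt.1 ((Real.dist_eq (J y) (J p)) ▸ hb hd)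
    linarith [this.1]
  have ha0 : 0 < p - ε := by linarith
  have hev : ∀ᶠ c in atTop, (∫ y, J y * Real.exp (lamf c * y)) - c * lamf c ≤
      1 - ((p + ε) - (p - ε)) * (J p / 2 * Real.exp (lamf c * (p - ε))) := by
    filter_upwards [hlam_top.eventually (eventually_ge_atTop (2 / (p - ε))),
      eventually_gt_atTop 0] with c h2 hc0
    obtain ⟨hl, heq⟩ := hlamf c hc0
    rw [hident c hc0]
    refine main_bound J hJnn hJInt hJint hl ha0 (by linarith) ?_ (by positivity) hJm
      (hfint _ hl)
    rw [div_le_iff₀ ha0] at h2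
    linarith
  have hlim : Tendsto
      (fun c => 1 - ((p + ε) - (p - ε)) * (J p / 2 * Real.exp (lamf c * (p - ε))))
      atTop atBot := by
    have h1 : Tendsto (fun c => lamf c * (p - ε)) atTop atTop :=
      hlam_top.atTop_mul_const ha0
    have h2 : Tendsto (fun c => Real.exp (lamf c * (p - ε))) atTop atTop :=
      Real.tendsto_exp_atTop.comp h1
    have h3 : Tendsto
        (fun c => ((p + ε) - (p - ε)) * (J p / 2 * Real.exp (lamf c * (p - ε))))
        atTop atTop := by
      refine Tendsto.const_mul_atTop (by linarith) ?_
      exact Tendsto.const_mul_atTop (by positivity) h2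
    have h4 := tendsto_neg_atTop_atBot.comp h3
    have h5 := tendsto_atBot_add_const_left atTop 1 h4
    simpa [sub_eq_add_neg, Function.comp] using h5
  refine ⟨fun c hc => by rw [hident c hc, hsplitId c hc], ?_⟩
  exact tendsto_atBot_mono' atTop hev hlim
end

section
/- Let s₀ < 0 be fixed. There exists c* > 0 such that the equation ∫_ℝ J(y) e^{λ y} dy − 1 − c λ = s₀ has, with respect to the unknown λ > 0: no positive solution when 0 < c < c*, exactly one positive solution when c = c*, and exactly two positive solutions λ₁ < λ₂ when c > c*. Moreover for c > c* one has 0 < λ₁ < λ(c) < λ₂, where λ(c) is the unique positive root of ∫ J(y) e^{λ y} y dy = c. The critical speed c* is determined by Λ(λ(c*), c*) = s₀. -/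
open MeasureTheory Filter Set

lemma scalar_bound (l x : ℝ) :
    Real.exp (l * x) ≤ Real.exp ((|l| + 1) * x) + Real.exp (-(|l| + 1) * x) ∧
    |x| * Real.exp (l * x) ≤ Real.exp ((|l| + 1) * x) + Real.exp (-(|l| + 1) * x) := by
  have h1 : Real.exp ((|l| + 1) * |x|) ≤ Real.exp ((|l| + 1) * x) + Real.exp (-(|l| + 1) * x) := by
    rcases abs_cases x with ⟨h, _⟩ | ⟨h, _⟩
    · rw [h]; nlinarith [Real.exp_pos (-(|l| + 1) * x)]
    · rw [h, show (|l| + 1) * -x = -(|l|+1) * x by ring]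
      nlinarith [Real.exp_pos ((|l| + 1) * x)]
  constructor
  · refine le_trans ?_ h1
    apply Real.exp_le_exp.2
    have : l * x ≤ |l * x| := le_abs_self _
    rw [abs_mul] at this
    nlinarith [abs_nonneg x, abs_nonneg l]
  · refine le_trans ?_ h1
    have h2 : |x| * Real.exp (l * x) ≤ |x| * Real.exp (|l| * |x|) := by
      apply mul_le_mul_of_nonneg_left _ (abs_nonneg x)
      apply Real.exp_le_exp.2
      calc l * x ≤ |l * x| := le_abs_self _
        _ = |l| * |x| := abs_mul _ _
    refine h2.trans ?_
    have h3 : |x| ≤ Real.exp |x| := by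
      nlinarith [Real.add_one_le_exp |x|]
    calc |x| * Real.exp (|l| * |x|) ≤ Real.exp |x| * Real.exp (|l| * |x|) := by
          apply mul_le_mul_of_nonneg_right h3 (Real.exp_pos _).le
      _ = Real.exp ((|l| + 1) * |x|) := by rw [← Real.exp_add]; ring_nf

lemma int_neg_exp (J : ℝ → ℝ) (hJsym : ∀ x, J (-x) = J x)
    (hJexp : ∀ l : ℝ, 0 < l → Integrable (fun x => J x * Real.exp (l * x)))
    (k : ℝ) (hk : 0 < k) : Integrable (fun x => J x * Real.exp (-k * x)) := by
  have h1 := hJexp k hk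
  have h2 : Integrable ((fun x => J x * Real.exp (k * x)) ∘ (fun x : ℝ => -x)) := by
    rw [(Measure.measurePreserving_neg volume).integrable_comp_emb
      (MeasurableEquiv.neg ℝ).measurableEmbedding]
    exact h1
  have : ((fun x => J x * Real.exp (k * x)) ∘ (fun x : ℝ => -x))
      = fun x => J x * Real.exp (-k * x) := by
    funext x
    simp [Function.comp, hJsym x]
  rwa [this] at h2

lemma int_exp (J : ℝ → ℝ) (hJc : Continuous J) (hJnn : ∀ x, 0 ≤ J x)
    (hJsym : ∀ x, J (-x) = J x)
    (hJexp : ∀ l : ℝ, 0 < l → Integrable (fun x => J x * Real.exp (l * x)))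
    (l : ℝ) : Integrable (fun x => J x * Real.exp (l * x)) := by
  have hg : Integrable (fun x => J x * Real.exp ((|l| + 1) * x)
      + J x * Real.exp (-(|l| + 1) * x)) :=
    (hJexp (|l| + 1) (by positivity)).add
      (int_neg_exp J hJsym hJexp (|l| + 1) (by positivity))
  refine hg.mono ?_ ?_
  · exact (hJc.mul (Real.continuous_exp.comp (continuous_const.mul continuous_id))).aestronglyMeasurable
  · filter_upwards with x
    have hb := (scalar_bound l x).1
    have h0 : 0 ≤ J x := hJnn x
    rw [Real.norm_eq_abs, Real.norm_eq_abs, abs_of_nonneg (by positivity),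
      abs_of_nonneg (by positivity)]
    nlinarith [Real.exp_pos ((|l|+1)*x), Real.exp_pos (-(|l|+1)*x), Real.exp_pos (l*x)]

lemma int_exp_mul (J : ℝ → ℝ) (hJc : Continuous J) (hJnn : ∀ x, 0 ≤ J x)
    (hJsym : ∀ x, J (-x) = J x)
    (hJexp : ∀ l : ℝ, 0 < l → Integrable (fun x => J x * Real.exp (l * x)))
    (l : ℝ) : Integrable (fun x => J x * Real.exp (l * x) * x) := by
  have hg : Integrable (fun x => J x * Real.exp ((|l| + 1) * x)
      + J x * Real.exp (-(|l| + 1) * x)) :=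
    (hJexp (|l| + 1) (by positivity)).add
      (int_neg_exp J hJsym hJexp (|l| + 1) (by positivity))
  refine hg.mono ?_ ?_
  · exact ((hJc.mul (Real.continuous_exp.comp (continuous_const.mul continuous_id))).mul
      continuous_id).aestronglyMeasurable
  · filter_upwards with x
    have hb := (scalar_bound l x).2
    have h0 : 0 ≤ J x := hJnn x
    have hRnn : (0:ℝ) ≤ J x * Real.exp ((|l| + 1) * x) + J x * Real.exp (-(|l| + 1) * x) := by
      positivity
    rw [Real.norm_eq_abs, Real.norm_eq_abs, abs_mul, abs_mul, abs_of_nonneg h0,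
      abs_of_nonneg (Real.exp_pos _).le, abs_of_nonneg hRnn]
    nlinarith [Real.exp_pos ((|l|+1)*x), Real.exp_pos (-(|l|+1)*x), Real.exp_pos (l*x),
      abs_nonneg x, mul_le_mul_of_nonneg_left hb h0]

lemma grad_ineq (J : ℝ → ℝ) (hJc : Continuous J) (hJnn : ∀ x, 0 ≤ J x)
    (hJsym : ∀ x, J (-x) = J x) (hJ0 : 0 < J 0)
    (hJexp : ∀ l : ℝ, 0 < l → Integrable (fun x => J x * Real.exp (l * x)))
    (x y : ℝ) (hxy : x ≠ y) :
    (y - x) * (∫ t, J t * Real.exp (x * t) * t)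
      < (∫ t, J t * Real.exp (y * t)) - (∫ t, J t * Real.exp (x * t)) := by
  set g : ℝ → ℝ := fun t => J t * Real.exp (y * t) - J t * Real.exp (x * t)
    - (y - x) * (J t * Real.exp (x * t) * t) with hg
  have hiy := int_exp J hJc hJnn hJsym hJexp y
  have hix := int_exp J hJc hJnn hJsym hJexp x
  have him := int_exp_mul J hJc hJnn hJsym hJexp x
  have hint_g : Integrable g := (hiy.sub hix).sub (him.const_mul (y - x))
  have hIg : ∫ t, g t = (∫ t, J t * Real.exp (y * t)) - (∫ t, J t * Real.exp (x * t))
      - (y - x) * (∫ t, J t * Real.exp (x * t) * t) := by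
    have h3 := integral_sub (hiy.sub hix) (him.const_mul (y - x))
    have h1 := integral_sub hiy hix
    have h2 := MeasureTheory.integral_const_mul (μ := volume) (y - x) (fun t => J t * Real.exp (x * t) * t)
    simp only [Pi.sub_apply] at h3
    rw [h1, h2] at h3
    exact h3
  have hfac : ∀ t, g t = J t * Real.exp (x * t) * (Real.exp ((y - x) * t) - 1 - (y - x) * t) := by
    intro t
    have he : Real.exp (x * t) * Real.exp ((y - x) * t) = Real.exp (y * t) := by
      rw [← Real.exp_add]; ring_nf
    simp only [hg]
    linear_combination (-(J t)) * he
  have hnn : 0 ≤ g := by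
    intro t
    rw [hfac t]
    have h1 := Real.add_one_le_exp ((y - x) * t)
    exact mul_nonneg (mul_nonneg (hJnn t) (Real.exp_pos _).le) (by linarith)
  have hcont : Continuous g := by
    apply Continuous.sub
    · exact (hJc.mul (Real.continuous_exp.comp (continuous_const.mul continuous_id))).sub
        (hJc.mul (Real.continuous_exp.comp (continuous_const.mul continuous_id)))
    · exact continuous_const.mul ((hJc.mul
        (Real.continuous_exp.comp (continuous_const.mul continuous_id))).mul continuous_id)
  have hpos : 0 < ∫ t, g t := by
    refine (integral_pos_iff_support_of_nonneg hnn hint_g).2 ?_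
    obtain ⟨δ, hδ, hball⟩ := Metric.continuousAt_iff.1 hJc.continuousAt (J 0) hJ0
    set t₀ : ℝ := δ / 2 with ht₀
    have ht₀pos : 0 < t₀ := by positivity
    have hJt₀ : 0 < J t₀ := by
      have h1 : dist t₀ 0 < δ := by
        rw [Real.dist_eq, sub_zero, abs_of_pos ht₀pos]; linarith
      have h2 := hball h1
      rw [Real.dist_eq] at h2
      have := abs_lt.1 h2
      linarith [this.1]
    have hg₀ : 0 < g t₀ := by
      rw [hfac t₀]
      have hne : (y - x) * t₀ ≠ 0 := mul_ne_zero (sub_ne_zero.2 (Ne.symm hxy)) (ne_of_gt ht₀pos)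
      have h3 := Real.add_one_lt_exp hne
      exact mul_pos (mul_pos hJt₀ (Real.exp_pos _)) (by linarith)
    have hopen : IsOpen {t | 0 < g t} := isOpen_lt continuous_const hcont
    calc (0 : ENNReal) < volume {t | 0 < g t} := hopen.measure_pos volume ⟨t₀, hg₀⟩
      _ ≤ volume (Function.support g) := measure_mono (fun t ht => ne_of_gt ht)
  rw [hIg] at hpos
  linarith

lemma odd_zero (J : ℝ → ℝ) (hJsym : ∀ x, J (-x) = J x) :
    (∫ t, J t * Real.exp (0 * t) * t) = 0 := by
  have h1 : (∫ t : ℝ, J t * Real.exp (0 * t) * t) = ∫ t : ℝ, J t * t := by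
    congr 1; funext t; simp
  rw [h1]
  have h2 : (∫ t : ℝ, J (-t) * (-t)) = ∫ t : ℝ, J t * t :=
    (Measure.measurePreserving_neg volume).integral_comp
      (MeasurableEquiv.neg ℝ).measurableEmbedding (fun t => J t * t)
  have h3 : (∫ t : ℝ, J (-t) * (-t)) = - ∫ t : ℝ, J t * t := by
    rw [show (fun t : ℝ => J (-t) * (-t)) = fun t : ℝ => -(J t * t) by
      funext t; rw [hJsym t]; ring]
    exact integral_neg _
  linarith [h2, h3]

lemma growth (J : ℝ → ℝ) (hJc : Continuous J) (hJnn : ∀ x, 0 ≤ J x)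
    (hJsym : ∀ x, J (-x) = J x) (hJ0 : 0 < J 0)
    (hJexp : ∀ l : ℝ, 0 < l → Integrable (fun x => J x * Real.exp (l * x))) :
    ∃ a ε : ℝ, 0 < a ∧ 0 < ε ∧ ∀ l : ℝ, 0 ≤ l →
      ε * Real.exp (a * l) ≤ ∫ t, J t * Real.exp (l * t) := by
  obtain ⟨δ, hδ, hball⟩ := Metric.continuousAt_iff.1 hJc.continuousAt (J 0 / 2) (by positivity)
  have hJpos : ∀ t : ℝ, |t| < δ → J 0 / 2 ≤ J t := by
    intro t ht
    have h2 := hball (show dist t 0 < δ by rwa [Real.dist_eq, sub_zero])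
    rw [Real.dist_eq] at h2
    have := abs_lt.1 h2
    linarith [this.1]
  set a : ℝ := δ / 2 with ha
  set b : ℝ := 3 * δ / 4 with hb
  have hapos : 0 < a := by rw [ha]; linarith
  have hbapos : 0 < b - a := by rw [ha, hb]; linarith
  refine ⟨a, J 0 / 2 * (b - a), hapos, by nlinarith [hJ0], ?_⟩
  intro l hl
  have hint : Integrable (fun t => J t * Real.exp (l * t)) :=
    int_exp J hJc hJnn hJsym hJexp l
  have hnn : 0 ≤ᵐ[volume] fun t => J t * Real.exp (l * t) :=
    Eventually.of_forall fun t => mul_nonneg (hJnn t) (Real.exp_pos _).le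
  have hstep1 : (∫ t in Icc a b, J t * Real.exp (l * t)) ≤ ∫ t, J t * Real.exp (l * t) :=
    setIntegral_le_integral hint hnn
  have hstep2 : J 0 / 2 * Real.exp (a * l) * (volume (Icc a b)).toReal
      ≤ ∫ t in Icc a b, J t * Real.exp (l * t) := by
    refine setIntegral_ge_of_const_le_real measurableSet_Icc (by simp) (fun t ht => ?_)
      hint.integrableOn
    have h1 : J 0 / 2 ≤ J t := by
      apply hJpos
      rw [abs_of_nonneg (le_trans hapos.le ht.1)]
      have : t ≤ b := ht.2
      rw [hb] at this; linarith
    have h2 : Real.exp (a * l) ≤ Real.exp (l * t) := by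
      apply Real.exp_le_exp.2
      rw [mul_comm a l]
      exact mul_le_mul_of_nonneg_left ht.1 hl
    exact mul_le_mul h1 h2 (Real.exp_pos _).le (le_trans (by linarith [hJ0]) h1)
  have hvol : (volume (Icc a b)).toReal = b - a := by
    rw [Real.volume_Icc, ENNReal.toReal_ofReal (by rw [ha, hb]; linarith)]
  rw [hvol] at hstep2
  calc J 0 / 2 * (b - a) * Real.exp (a * l) = J 0 / 2 * Real.exp (a * l) * (b - a) := by ring
    _ ≤ ∫ t in Icc a b, J t * Real.exp (l * t) := hstep2
    _ ≤ _ := hstep1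

set_option maxHeartbeats 1000000 in
theorem stmt_4 (J : ℝ → ℝ) (hJc : Continuous J) (hJnn : ∀ x, 0 ≤ J x)
    (hJsym : ∀ x, J (-x) = J x) (hJint : ∫ x, J x = 1) (hJ0 : 0 < J 0)
    (hJexp : ∀ l : ℝ, 0 < l → Integrable (fun x => J x * Real.exp (l * x)))
    (s₀ : ℝ) (hs₀ : s₀ < 0)
    (lamf : ℝ → ℝ) (hlamf : ∀ c : ℝ, 0 < c → 0 < lamf c ∧
      (∫ y, J y * Real.exp (lamf c * y) * y) = c) :
    ∃ cstar : ℝ, 0 < cstar ∧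
      ((∫ y, J y * Real.exp (lamf cstar * y)) - 1 - cstar * lamf cstar = s₀) ∧
      (∀ c : ℝ, 0 < c → c < cstar →
        ¬ ∃ lam : ℝ, 0 < lam ∧ (∫ y, J y * Real.exp (lam * y)) - 1 - c * lam = s₀) ∧
      (∃! lam : ℝ, 0 < lam ∧
        (∫ y, J y * Real.exp (lam * y)) - 1 - cstar * lam = s₀) ∧
      (∀ c : ℝ, cstar < c → ∃ lam₁ lam₂ : ℝ,
        0 < lam₁ ∧ lam₁ < lamf c ∧ lamf c < lam₂ ∧
        ((∫ y, J y * Real.exp (lam₁ * y)) - 1 - c * lam₁ = s₀) ∧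
        ((∫ y, J y * Real.exp (lam₂ * y)) - 1 - c * lam₂ = s₀) ∧
        (∀ lam : ℝ, 0 < lam →
          (∫ y, J y * Real.exp (lam * y)) - 1 - c * lam = s₀ →
          lam = lam₁ ∨ lam = lam₂)) := by
  classical
  set M : ℝ → ℝ := fun l => ∫ t, J t * Real.exp (l * t) with hMdef
  set N : ℝ → ℝ := fun l => ∫ t, J t * Real.exp (l * t) * t with hNdef
  have hgrad : ∀ x y : ℝ, x ≠ y → (y - x) * N x < M y - M x :=
    fun x y h => grad_ineq J hJc hJnn hJsym hJ0 hJexp x y h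
  have hNmono : ∀ x y : ℝ, x < y → N x < N y := by
    intro x y h
    have h1 := hgrad x y h.ne
    have h2 := hgrad y x h.ne'
    nlinarith
  have hNmono' : ∀ x y : ℝ, x ≤ y → N x ≤ N y := by
    intro x y h
    rcases eq_or_lt_of_le h with h | h
    · rw [h]
    · exact (hNmono x y h).le
  have hM0 : M 0 = 1 := by
    have : M 0 = ∫ t, J t := by
      simp only [hMdef, zero_mul, Real.exp_zero, mul_one]
    rw [this, hJint]
  have hN0 : N 0 = 0 := odd_zero J hJsym
  have hNval : ∀ c : ℝ, 0 < c → N (lamf c) = c := fun c hc => (hlamf c hc).2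
  have hlamf_pos : ∀ c : ℝ, 0 < c → 0 < lamf c := fun c hc => (hlamf c hc).1
  have hlamf_mono : ∀ c c' : ℝ, 0 < c → c < c' → lamf c < lamf c' := by
    intro c c' hc hcc'
    by_contra h
    push_neg at h
    have h1 : N (lamf c') ≤ N (lamf c) := hNmono' _ _ h
    rw [hNval c hc, hNval c' (hc.trans hcc')] at h1
    linarith
  have hlamf_mono' : ∀ c c' : ℝ, 0 < c → c ≤ c' → lamf c ≤ lamf c' := by
    intro c c' hc h
    rcases eq_or_lt_of_le h with h | h
    · rw [h]
    · exact (hlamf_mono c c' hc h).le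
  have hMgt1 : ∀ l : ℝ, 0 < l → 1 < M l := by
    intro l hl
    have h1 := hgrad 0 l hl.ne
    rw [hN0, hM0] at h1
    linarith
  have hmin : ∀ c : ℝ, 0 < c → ∀ l : ℝ, l ≠ lamf c →
      M (lamf c) - 1 - c * lamf c < M l - 1 - c * l := by
    intro c hc l hl
    have h1 := hgrad (lamf c) l (Ne.symm hl)
    rw [hNval c hc] at h1
    linarith
  have hmin' : ∀ c : ℝ, 0 < c → ∀ l : ℝ,
      M (lamf c) - 1 - c * lamf c ≤ M l - 1 - c * l := by
    intro c hc l
    rcases eq_or_ne l (lamf c) with h | h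
    · rw [h]
    · exact (hmin c hc l h).le
  have hLmono_right : ∀ c : ℝ, 0 < c → ∀ x y : ℝ, lamf c ≤ x → x < y →
      M x - 1 - c * x < M y - 1 - c * y := by
    intro c hc x y hx hxy
    have h1 := hgrad x y hxy.ne
    have h2 : c ≤ N x := by
      have := hNmono' (lamf c) x hx
      rw [hNval c hc] at this; linarith
    nlinarith
  have hLmono_left : ∀ c : ℝ, 0 < c → ∀ x y : ℝ, x < y → y ≤ lamf c →
      M y - 1 - c * y < M x - 1 - c * x := by
    intro c hc x y hxy hy
    have h1 := hgrad y x hxy.ne'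
    have h2 : N y ≤ c := by
      have := hNmono' y (lamf c) hy
      rw [hNval c hc] at this; linarith
    nlinarith
  -- continuity of l ↦ M l - 1 - c*l on compacts
  have hMlip : ∀ p q : ℝ, ∀ u ∈ Icc p q, ∀ v ∈ Icc p q,
      |M u - M v| ≤ max |N p| |N q| * |u - v| := by
    intro p q u hu v hv
    have hNbd : ∀ w : ℝ, w ∈ Icc p q → |N w| ≤ max |N p| |N q| := by
      intro w hw
      rw [abs_le]
      constructor
      · have h1 := hNmono' p w hw.1
        have h2 := neg_abs_le (N p)
        have h3 := le_max_left |N p| |N q|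
        linarith
      · have h1 := hNmono' w q hw.2
        have h2 := le_abs_self (N q)
        have h3 := le_max_right |N p| |N q|
        linarith
    have key : ∀ a b : ℝ, a ∈ Icc p q → b ∈ Icc p q → a < b →
        |M b - M a| ≤ max |N p| |N q| * (b - a) := by
      intro a b ha hb hab
      have h1 := hgrad a b hab.ne
      have h2 := hgrad b a hab.ne'
      have h3 := hNbd a ha
      have h4 := hNbd b hb
      rw [abs_le] at h3 h4 ⊢
      constructor
      · nlinarith [h3.1]
      · nlinarith [h4.2]
    rcases lt_trichotomy u v with h | h | h
    · rw [abs_sub_comm (M u) (M v), abs_sub_comm u v,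
        abs_of_nonneg (by linarith : (0:ℝ) ≤ v - u)]
      exact key u v hu hv h
    · simp [h]
    · rw [abs_of_nonneg (by linarith : (0:ℝ) ≤ u - v)]
      exact key v u hv hu h
  have hΛcont : ∀ c p q : ℝ, ContinuousOn (fun l => M l - 1 - c * l) (Icc p q) := by
    intro c p q
    have hMcont : ContinuousOn M (Icc p q) := by
      apply LipschitzOnWith.continuousOn (K := Real.toNNReal (max |N p| |N q|))
      apply LipschitzOnWith.of_dist_le_mul
      intro u hu v hv
      rw [Real.dist_eq, Real.dist_eq,
        Real.coe_toNNReal _ ((abs_nonneg (N p)).trans (le_max_left _ _))]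
      exact hMlip p q u hu v hv
    exact (hMcont.sub continuousOn_const).sub
      ((continuous_const.mul continuous_id).continuousOn)
  -- the function H
  set H : ℝ → ℝ := fun c => M (lamf c) - 1 - c * lamf c with hHdef
  have hHval : ∀ c : ℝ, H c = M (lamf c) - 1 - c * lamf c := fun c => rfl
  have hHdec : ∀ c c' : ℝ, 0 < c → c < c' → H c' < H c := by
    intro c c' hc hcc'
    have h1 : M (lamf c') - 1 - c' * lamf c' ≤ M (lamf c) - 1 - c' * lamf c :=
      hmin' c' (hc.trans hcc') (lamf c)
    have h2 := hlamf_pos c hc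
    rw [hHval c', hHval c]
    nlinarith
  -- endpoints for IVT in c
  have hl1pos := hlamf_pos 1 one_pos
  set c₁ : ℝ := min (1/2) (-s₀ / (2 * lamf 1)) with hc₁def
  have hc₁pos : 0 < c₁ :=
    lt_min (by norm_num) (div_pos (by linarith) (by linarith))
  have hc₁lt1 : c₁ < 1 := lt_of_le_of_lt (min_le_left _ _) (by norm_num)
  have hHc₁ : s₀ < H c₁ := by
    have hlampos₁ := hlamf_pos c₁ hc₁pos
    have hlamle₁ : lamf c₁ ≤ lamf 1 := (hlamf_mono c₁ 1 hc₁pos hc₁lt1).le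
    have hM1 := hMgt1 (lamf c₁) hlampos₁
    have hb : c₁ * lamf c₁ ≤ (-s₀ / (2 * lamf 1)) * lamf 1 :=
      mul_le_mul (min_le_right _ _) hlamle₁ hlampos₁.le
        (le_of_lt (div_pos (by linarith) (by linarith)))
    have heq : (-s₀ / (2 * lamf 1)) * lamf 1 = -s₀ / 2 := by
      field_simp
    rw [heq] at hb
    rw [hHval]
    linarith
  set c₂ : ℝ := max (c₁ + 1) (M 1 - s₀) with hc₂def
  have hc₁c₂ : c₁ < c₂ := lt_of_lt_of_le (by linarith) (le_max_left _ _)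
  have hc₂pos : 0 < c₂ := hc₁pos.trans hc₁c₂
  have hHc₂ : H c₂ < s₀ := by
    have h1 : H c₂ ≤ M 1 - 1 - c₂ * 1 := hmin' c₂ hc₂pos 1
    have h2 : M 1 - s₀ ≤ c₂ := le_max_right _ _
    linarith
  -- continuity of H on [c₁, c₂]
  have hHdiff : ∀ u v : ℝ, 0 < u → u ≤ v →
      (v - u) * lamf u ≤ H u - H v ∧ H u - H v ≤ (v - u) * lamf v := by
    intro u v hu huv
    have hv : 0 < v := lt_of_lt_of_le hu huv
    have h1 : M (lamf u) - 1 - u * lamf u ≤ M (lamf v) - 1 - u * lamf v :=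
      hmin' u hu (lamf v)
    have h2 : M (lamf v) - 1 - v * lamf v ≤ M (lamf u) - 1 - v * lamf u :=
      hmin' v hv (lamf u)
    rw [hHval u, hHval v]
    constructor <;> nlinarith
  have hHcont : ContinuousOn H (Icc c₁ c₂) := by
    apply LipschitzOnWith.continuousOn (K := Real.toNNReal (lamf c₂))
    apply LipschitzOnWith.of_dist_le_mul
    intro u hu v hv
    rw [Real.dist_eq, Real.dist_eq, Real.coe_toNNReal _ (hlamf_pos c₂ hc₂pos).le]
    have hucpos : 0 < u := hc₁pos.trans_le hu.1
    have hvcpos : 0 < v := hc₁pos.trans_le hv.1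
    rcases le_total u v with h | h
    · have hd := hHdiff u v hucpos h
      have hlu : 0 ≤ lamf u := (hlamf_pos u hucpos).le
      have hlv : lamf v ≤ lamf c₂ := hlamf_mono' v c₂ hvcpos hv.2
      rw [abs_of_nonneg (by nlinarith [hd.1] : (0:ℝ) ≤ H u - H v),
        abs_of_nonpos (by linarith : u - v ≤ 0)]
      nlinarith [hd.2, (hlamf_pos v hvcpos).le]
    · have hd := hHdiff v u hvcpos h
      have hlu : 0 ≤ lamf v := (hlamf_pos v hvcpos).le
      have hlv : lamf u ≤ lamf c₂ := hlamf_mono' u c₂ hucpos hu.2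
      rw [abs_sub_comm, abs_of_nonneg (by nlinarith [hd.1] : (0:ℝ) ≤ H v - H u),
        abs_sub_comm, abs_of_nonpos (by linarith : v - u ≤ 0)]
      nlinarith [hd.2, (hlamf_pos u hucpos).le]
  -- get cstar
  obtain ⟨cstar, hcmem, hcstar⟩ :=
    intermediate_value_Icc' hc₁c₂.le hHcont ⟨hHc₂.le, hHc₁.le⟩
  have hcstar_pos : 0 < cstar := hc₁pos.trans_le hcmem.1
  refine ⟨cstar, hcstar_pos, hcstar, ?_, ?_, ?_⟩
  · -- no solution for c < cstar
    rintro c hc hlt ⟨lam, hlam, heq⟩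
    have heq' : M lam - 1 - c * lam = s₀ := heq
    have h1 : H c ≤ M lam - 1 - c * lam := hmin' c hc lam
    have h2 : H cstar < H c := hHdec c cstar hc hlt
    rw [hcstar] at h2
    linarith
  · -- unique solution for c = cstar
    refine ⟨lamf cstar, ⟨hlamf_pos cstar hcstar_pos, hcstar⟩, ?_⟩
    rintro lam ⟨hlampos, heq⟩
    have heq' : M lam - 1 - cstar * lam = s₀ := heq
    by_contra hne
    have h1 := hmin cstar hcstar_pos lam hne
    have h2 : H cstar = s₀ := hcstar
    rw [hHval] at h2
    linarith
  · -- two solutions for c > cstar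
    intro c hc
    have hcpos : 0 < c := hcstar_pos.trans hc
    have hlamc := hlamf_pos c hcpos
    have hHc : H c < s₀ := by
      have := hHdec cstar c hcstar_pos hc
      rw [hcstar] at this
      exact this
    have hHcM : M (lamf c) - 1 - c * lamf c < s₀ := hHc
    -- small point aS
    set aS : ℝ := min (lamf c / 2) (-s₀ / (2 * c)) with haSdef
    have haSpos : 0 < aS := lt_min (by linarith) (div_pos (by linarith) (by linarith))
    have haSlt : aS < lamf c := lt_of_le_of_lt (min_le_left _ _) (by linarith)
    have hfaS : s₀ < M aS - 1 - c * aS := by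
      have h1 := hMgt1 aS haSpos
      have h2 : c * aS ≤ c * (-s₀ / (2 * c)) :=
        mul_le_mul_of_nonneg_left (min_le_right _ _) hcpos.le
      have h3 : c * (-s₀ / (2 * c)) = -s₀ / 2 := by field_simp
      rw [h3] at h2
      linarith
    -- left root
    obtain ⟨lam₁, hmem₁, hflam₁⟩ :=
      intermediate_value_Icc' haSlt.le (hΛcont c aS (lamf c)) ⟨hHcM.le, hfaS.le⟩
    have hflam₁' : M lam₁ - 1 - c * lam₁ = s₀ := hflam₁
    have hlam₁pos : 0 < lam₁ := haSpos.trans_le hmem₁.1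
    have hlam₁lt : lam₁ < lamf c := by
      rcases eq_or_lt_of_le hmem₁.2 with h | h
      · exfalso; rw [h] at hflam₁'; linarith
      · exact h
    -- big point b
    obtain ⟨a, ε, hapos, hεpos, hgrow⟩ := growth J hJc hJnn hJsym hJ0 hJexp
    set b : ℝ := max (lamf c + 1) (4 * (c + 2 - s₀) / (ε * a ^ 2) + 1) with hbdef
    have hb1 : lamf c < b := lt_of_lt_of_le (by linarith) (le_max_left _ _)
    have hbpos : 0 < b := hlamc.trans hb1
    have hb2 : 4 * (c + 2 - s₀) / (ε * a ^ 2) + 1 ≤ b := le_max_right _ _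
    have hb3 : (1:ℝ) ≤ b := by
      have h4 : 0 ≤ 4 * (c + 2 - s₀) / (ε * a ^ 2) :=
        div_nonneg (by linarith) (by positivity)
      linarith
    have hfb : s₀ < M b - 1 - c * b := by
      have hg' : ε * Real.exp (a * b) ≤ M b := hgrow b hbpos.le
      have hexp : Real.exp (a * b) = Real.exp (a * b / 2) * Real.exp (a * b / 2) := by
        rw [← Real.exp_add]; ring_nf
      have he1 := Real.add_one_le_exp (a * b / 2)
      have hab : 4 * (c + 2 - s₀) ≤ ε * a ^ 2 * (b - 1) := by
        rw [div_add' _ _ _ (by positivity), div_le_iff₀ (by positivity)] at hb2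
        linarith
      have h0 : 0 ≤ a * b / 2 + 1 := by positivity
      have hsq : (a * b / 2 + 1) * (a * b / 2 + 1)
          ≤ Real.exp (a * b / 2) * Real.exp (a * b / 2) :=
        mul_le_mul (by linarith) (by linarith) h0 (Real.exp_pos _).le
      have hA : a ^ 2 * b ^ 2 / 4 ≤ (a * b / 2 + 1) * (a * b / 2 + 1) := by
        have hab0 : 0 ≤ a * b := (mul_pos hapos hbpos).le
        nlinarith [hab0]
      have hq : ε * (a ^ 2 * b ^ 2 / 4) ≤ ε * Real.exp (a * b) := by
        rw [hexp]
        exact mul_le_mul_of_nonneg_left (hA.trans hsq) hεpos.le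
      have h5 : 4 * (c + 2 - s₀) * b ≤ ε * a ^ 2 * (b - 1) * b :=
        mul_le_mul_of_nonneg_right hab hbpos.le
      have h6 : ε * a ^ 2 * (b - 1) * b ≤ ε * a ^ 2 * b ^ 2 := by
        have h7 : 0 ≤ ε * a ^ 2 * b :=
          mul_nonneg (mul_nonneg hεpos.le (sq_nonneg a)) hbpos.le
        linarith
      have h8 : 0 ≤ (2 - s₀) * (b - 1) :=
        mul_nonneg (by linarith) (by linarith)
      linarith [hg', hq, h5, h6, h8]
    -- right root
    obtain ⟨lam₂, hmem₂, hflam₂⟩ :=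
      intermediate_value_Icc hb1.le (hΛcont c (lamf c) b) ⟨hHcM.le, hfb.le⟩
    have hflam₂' : M lam₂ - 1 - c * lam₂ = s₀ := hflam₂
    have hlam₂gt : lamf c < lam₂ := by
      rcases eq_or_lt_of_le hmem₂.1 with h | h
      · exfalso; rw [← h] at hflam₂'; linarith
      · exact h
    refine ⟨lam₁, lam₂, hlam₁pos, hlam₁lt, hlam₂gt, hflam₁, hflam₂, ?_⟩
    intro lam hlampos heq
    have heq' : M lam - 1 - c * lam = s₀ := heq
    rcases lt_trichotomy lam (lamf c) with h | h | h
    · left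
      by_contra hne
      rcases lt_or_gt_of_ne hne with hlt | hgt
      · have := hLmono_left c hcpos lam lam₁ hlt hlam₁lt.le
        linarith
      · have := hLmono_left c hcpos lam₁ lam hgt h.le
        linarith
    · exfalso
      rw [h] at heq'
      linarith
    · right
      by_contra hne
      rcases lt_or_gt_of_ne hne with hlt | hgt
      · have := hLmono_right c hcpos lam lam₂ (le_of_lt h) hlt
        linarith
      · have := hLmono_right c hcpos lam₂ lam hlam₂gt.le hgt
        linarith
end

section
/- With the operator L_s defined as above, L_s is a compact operator on L¹(0, a⁺) for each s ∈ ℝ. -/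
open MeasureTheory Filter Set
open scoped ENNReal NNReal BoundedContinuousFunction
set_option maxHeartbeats 1000000

lemma exp_lip {c x y : ℝ} (hx : x ≤ c) (hy : y ≤ c) :
    |Real.exp x - Real.exp y| ≤ Real.exp c * |x - y| := by
  wlog h : y ≤ x generalizing x y
  · rw [abs_sub_comm, abs_sub_comm x y]; exact this hy hx (le_of_not_ge h)
  have h1 : Real.exp x * (1 + (y - x)) ≤ Real.exp y := by
    have := Real.add_one_le_exp (y - x)
    have h2 : Real.exp x * ((y - x) + 1) ≤ Real.exp x * Real.exp (y - x) :=
      mul_le_mul_of_nonneg_left this (Real.exp_pos x).le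
    rw [← Real.exp_add] at h2
    simpa [add_comm, add_sub_cancel] using h2
  rw [abs_of_nonneg (sub_nonneg.2 (Real.exp_le_exp.2 h)), abs_of_nonneg (sub_nonneg.2 h)]
  nlinarith [Real.exp_pos x, Real.exp_le_exp.2 hx]

theorem stmt_7 (ap : ℝ) (hap : 0 < ap)
    (gam pf : ℝ → ℝ) (Kmat : ℝ → ℝ → ℝ)
    (hgamc : ContinuousOn gam (Set.Icc 0 ap)) (hgamnn : ∀ a ∈ Set.Icc 0 ap, 0 ≤ gam a)
    (hgamint : (∫ a in Set.Ioc 0 ap, gam a) = 1)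
    (hKc : ContinuousOn (fun p : ℝ × ℝ => Kmat p.1 p.2) (Set.Icc 0 ap ×ˢ Set.Icc 0 ap))
    (hKpos : ∀ a ∈ Set.Icc 0 ap, ∀ a' ∈ Set.Icc 0 ap, 0 < Kmat a a')
    (hpc : ContinuousOn pf (Set.Icc 0 ap)) (hppos : ∀ a ∈ Set.Icc 0 ap, 0 < pf a)
    (s : ℝ)
    (T : Lp ℝ 1 (volume.restrict (Set.Ioc (0:ℝ) ap)) →L[ℝ]
         Lp ℝ 1 (volume.restrict (Set.Ioc (0:ℝ) ap)))
    (hT : ∀ φ : Lp ℝ 1 (volume.restrict (Set.Ioc (0:ℝ) ap)),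
      (T φ : ℝ → ℝ) =ᵐ[volume.restrict (Set.Ioc (0:ℝ) ap)]
        fun a => Real.exp (s * a) * (∫ α in Set.Ioc 0 ap, gam α * φ α) +
          ∫ l in Set.Ioc 0 a, Real.exp (s * (a - l)) *
            (∫ a' in Set.Ioc 0 ap, Kmat l a' * pf a' * φ a')) :
    IsCompactOperator T := by
  classical
  haveI : IsFiniteMeasure (volume.restrict (Set.Ioc (0:ℝ) ap)) := by
    constructor
    rw [Measure.restrict_apply_univ]
    exact measure_Ioc_lt_top
  haveI : Fact ((1:ℝ≥0∞) ≤ 1) := ⟨le_refl _⟩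
  haveI : CompactSpace ↥(Set.Icc (0:ℝ) ap) := isCompact_iff_compactSpace.mp isCompact_Icc
  let projCont : C(ℝ, ↥(Set.Icc (0:ℝ) ap)) :=
    ⟨fun a => Set.projIcc 0 ap hap.le a, continuous_projIcc⟩
  let J : (↥(Set.Icc (0:ℝ) ap) →ᵇ ℝ) → Lp ℝ 1 (volume.restrict (Set.Ioc (0:ℝ) ap)) :=
    fun b => (BoundedContinuousFunction.toLp (E := ℝ) 1 (volume.restrict (Set.Ioc (0:ℝ) ap)) ℝ)
      (b.compContinuous projCont)
  have hJcont : Continuous J :=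
    (BoundedContinuousFunction.toLp (E := ℝ) 1 (volume.restrict (Set.Ioc (0:ℝ) ap)) ℝ
      ).continuous.comp (BoundedContinuousFunction.continuous_compContinuous projCont)
  -- bounds on the data
  obtain ⟨Cg, hCg⟩ := isCompact_Icc.exists_bound_of_continuousOn hgamc
  have hCg0 : 0 ≤ Cg := le_trans (norm_nonneg _) (hCg 0 ⟨le_refl 0, hap.le⟩)
  obtain ⟨CK, hCK⟩ := (isCompact_Icc.prod isCompact_Icc).exists_bound_of_continuousOn hKc
  have hCK0 : 0 ≤ CK :=
    le_trans (norm_nonneg _) (hCK (0,0) ⟨⟨le_refl 0, hap.le⟩, ⟨le_refl 0, hap.le⟩⟩)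
  obtain ⟨Cp, hCp⟩ := isCompact_Icc.exists_bound_of_continuousOn hpc
  have hCp0 : 0 ≤ Cp := le_trans (norm_nonneg _) (hCp 0 ⟨le_refl 0, hap.le⟩)
  set E := Real.exp (|s| * ap) with hE
  have hEpos : 0 < E := Real.exp_pos _
  have hEb : ∀ x : ℝ, |x| ≤ |s| * ap → Real.exp x ≤ E := fun x hx =>
    Real.exp_le_exp.2 (le_trans (le_abs_self x) hx)
  set Cu := E * (CK * Cp) with hCu
  have hCu0 : 0 ≤ Cu := by positivity
  set MM := E * (Cg + Cu * ap) with hMM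
  have hMM0 : 0 ≤ MM := by positivity
  set LL := E * |s| * (Cg + Cu * ap) + E * Cu with hLL
  have hLL0 : 0 ≤ LL := by positivity
  set LLn : ℝ≥0 := Real.toNNReal LL with hLLn
  have hLLncoe : (LLn : ℝ) = LL := Real.coe_toNNReal _ hLL0
  -- measurability helpers
  have hres : volume.restrict (Set.Ioc (0:ℝ) ap) ≤ volume.restrict (Set.Icc (0:ℝ) ap) :=
    Measure.restrict_mono Set.Ioc_subset_Icc_self le_rfl
  have hgamm : AEStronglyMeasurable gam (volume.restrict (Set.Ioc (0:ℝ) ap)) :=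
    (hgamc.aestronglyMeasurable measurableSet_Icc).mono_measure hres
  have hpfm : AEStronglyMeasurable pf (volume.restrict (Set.Ioc (0:ℝ) ap)) :=
    (hpc.aestronglyMeasurable measurableSet_Icc).mono_measure hres
  have hKm : AEStronglyMeasurable (fun p : ℝ×ℝ => Kmat p.1 p.2)
      ((volume.restrict (Set.Ioc (0:ℝ) ap)).prod (volume.restrict (Set.Ioc (0:ℝ) ap))) := by
    have h1 := hKc.aestronglyMeasurable (μ := (volume : Measure (ℝ×ℝ)))
      (measurableSet_Icc.prod measurableSet_Icc)
    rw [Measure.prod_restrict, ← Measure.volume_eq_prod]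
    exact h1.mono_measure (Measure.restrict_mono
      (Set.prod_mono Set.Ioc_subset_Icc_self Set.Ioc_subset_Icc_self) le_rfl)
  have hae : ∀ᵐ α ∂(volume.restrict (Set.Ioc (0:ℝ) ap)), α ∈ Set.Ioc 0 ap :=
    ae_restrict_mem measurableSet_Ioc
  -- key step
  have key : ∀ φ : Lp ℝ 1 (volume.restrict (Set.Ioc (0:ℝ) ap)), ‖φ‖ ≤ 1 →
      ∃ b : ↥(Set.Icc (0:ℝ) ap) →ᵇ ℝ,
        (LipschitzWith LLn b ∧ ∀ x, ‖b x‖ ≤ MM) ∧ T φ = J b := by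
    intro φ hφ
    have hTφ := hT φ
    have hφint : Integrable (⇑φ) (volume.restrict (Set.Ioc (0:ℝ) ap)) := L1.integrable_coeFn φ
    have hφnorm : (∫ α in Set.Ioc (0:ℝ) ap, ‖φ α‖) = ‖φ‖ := (L1.norm_eq_integral_norm φ).symm
    set cphi := ∫ α in Set.Ioc (0:ℝ) ap, gam α * φ α with hcphi_def
    set G : ℝ → ℝ := fun l => ∫ a' in Set.Ioc (0:ℝ) ap, Kmat l a' * pf a' * φ a' with hG_def
    set u : ℝ → ℝ := fun l => Real.exp (-(s*l)) * G l with hu_def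
    set v : ℝ → ℝ := fun a => ∫ l in Set.Ioc (0:ℝ) a, u l with hv_def
    set g : ℝ → ℝ := fun a => Real.exp (s*a) * (cphi + v a) with hg_def
    -- bound on cphi
    have hcphi_int : Integrable (fun α => gam α * φ α) (volume.restrict (Set.Ioc (0:ℝ) ap)) :=
      Integrable.bdd_mul hφint hgamm (by
        filter_upwards [hae] with α hα
        exact hCg α (Set.Ioc_subset_Icc_self hα))
    have hcphib : ‖cphi‖ ≤ Cg := by
      calc ‖cphi‖ ≤ ∫ α in Set.Ioc (0:ℝ) ap, ‖gam α * φ α‖ := norm_integral_le_integral_norm _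
      _ ≤ ∫ α in Set.Ioc (0:ℝ) ap, Cg * ‖φ α‖ := by
          refine integral_mono_ae hcphi_int.norm (hφint.norm.const_mul Cg) ?_
          filter_upwards [hae] with α hα
          rw [norm_mul]
          exact mul_le_mul_of_nonneg_right (hCg α (Set.Ioc_subset_Icc_self hα)) (norm_nonneg _)
      _ = Cg * ∫ α in Set.Ioc (0:ℝ) ap, ‖φ α‖ := integral_const_mul _ _
      _ ≤ Cg * 1 := by rw [hφnorm]; exact mul_le_mul_of_nonneg_left hφ hCg0
      _ = Cg := mul_one _
    -- bound on G
    have hGb : ∀ l ∈ Set.Icc (0:ℝ) ap, ‖G l‖ ≤ CK * Cp := by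
      intro l hl
      have hKl : ContinuousOn (fun a' => Kmat l a') (Set.Icc (0:ℝ) ap) := by
        have hc : ContinuousOn (fun a' : ℝ => ((l, a') : ℝ × ℝ)) (Set.Icc (0:ℝ) ap) :=
          (continuous_const.prodMk continuous_id).continuousOn
        exact hKc.comp hc (fun a' ha' => ⟨hl, ha'⟩)
      have hKlm : AEStronglyMeasurable (fun a' => Kmat l a' * pf a')
          (volume.restrict (Set.Ioc (0:ℝ) ap)) :=
        ((hKl.aestronglyMeasurable measurableSet_Icc).mono_measure hres).mul hpfm
      have hbd : ∀ᵐ a' ∂(volume.restrict (Set.Ioc (0:ℝ) ap)),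
          ‖Kmat l a' * pf a'‖ ≤ CK * Cp := by
        filter_upwards [hae] with a' ha'
        rw [norm_mul]
        exact mul_le_mul (hCK (l, a') ⟨hl, Set.Ioc_subset_Icc_self ha'⟩)
          (hCp a' (Set.Ioc_subset_Icc_self ha')) (norm_nonneg _) hCK0
      have hint : Integrable (fun a' => Kmat l a' * pf a' * φ a')
          (volume.restrict (Set.Ioc (0:ℝ) ap)) := Integrable.bdd_mul hφint hKlm hbd
      calc ‖G l‖ ≤ ∫ a' in Set.Ioc (0:ℝ) ap, ‖Kmat l a' * pf a' * φ a'‖ :=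
            norm_integral_le_integral_norm _
      _ ≤ ∫ a' in Set.Ioc (0:ℝ) ap, (CK * Cp) * ‖φ a'‖ := by
          refine integral_mono_ae hint.norm (hφint.norm.const_mul _) ?_
          filter_upwards [hbd] with a' ha'
          rw [norm_mul]
          exact mul_le_mul_of_nonneg_right ha' (norm_nonneg _)
      _ = (CK * Cp) * ∫ a' in Set.Ioc (0:ℝ) ap, ‖φ a'‖ := integral_const_mul _ _
      _ ≤ (CK * Cp) * 1 := by
          rw [hφnorm]
          exact mul_le_mul_of_nonneg_left hφ (by positivity)
      _ = CK * Cp := mul_one _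
    -- measurability of G and u
    have hGm : AEStronglyMeasurable G (volume.restrict (Set.Ioc (0:ℝ) ap)) := by
      have h2 : AEStronglyMeasurable (fun p : ℝ × ℝ => Kmat p.1 p.2 * pf p.2 * φ p.2)
          ((volume.restrict (Set.Ioc (0:ℝ) ap)).prod (volume.restrict (Set.Ioc (0:ℝ) ap))) :=
        (hKm.mul hpfm.comp_snd).mul hφint.1.comp_snd
      exact h2.integral_prod_right'
    have hum : AEStronglyMeasurable u (volume.restrict (Set.Ioc (0:ℝ) ap)) :=
      ((Real.continuous_exp.comp ((continuous_const.mul continuous_id).neg)).aestronglyMeasurable).mul hGm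
    have hub : ∀ l ∈ Set.Ioc (0:ℝ) ap, ‖u l‖ ≤ Cu := by
      intro l hl
      have hl' := Set.Ioc_subset_Icc_self hl
      have h1 : ‖Real.exp (-(s*l))‖ ≤ E := by
        rw [Real.norm_eq_abs, abs_of_pos (Real.exp_pos _)]
        apply hEb
        rw [abs_neg, abs_mul]
        apply mul_le_mul_of_nonneg_left _ (abs_nonneg s)
        rw [abs_of_nonneg hl'.1]
        exact hl'.2
      calc ‖u l‖ = ‖Real.exp (-(s*l))‖ * ‖G l‖ := norm_mul _ _
      _ ≤ E * (CK * Cp) := mul_le_mul h1 (hGb l hl') (norm_nonneg _) hEpos.le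
      _ = Cu := hCu.symm
    have huOn : ∀ a b : ℝ, 0 ≤ a → b ≤ ap → IntegrableOn u (Set.Ioc a b) volume := by
      intro a b ha hb
      have hsub : Set.Ioc a b ⊆ Set.Ioc 0 ap := Set.Ioc_subset_Ioc ha hb
      have hm : AEStronglyMeasurable u (volume.restrict (Set.Ioc a b)) :=
        hum.mono_measure (Measure.restrict_mono hsub le_rfl)
      refine Integrable.mono' (integrable_const Cu) hm ?_
      filter_upwards [ae_restrict_mem measurableSet_Ioc] with l hl
      exact hub l (hsub hl)
    -- v estimates
    have hvsub : ∀ a b : ℝ, 0 ≤ a → a ≤ b → b ≤ ap →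
        v b - v a = ∫ l in Set.Ioc a b, u l := by
      intro a b h0 hab hbap
      have hdisj : Disjoint (Set.Ioc (0:ℝ) a) (Set.Ioc a b) := Set.Ioc_disjoint_Ioc_of_le le_rfl
      have hun : Set.Ioc (0:ℝ) a ∪ Set.Ioc a b = Set.Ioc 0 b := Set.Ioc_union_Ioc_eq_Ioc h0 hab
      have : v b = v a + ∫ l in Set.Ioc a b, u l := by
        rw [hv_def]
        simp only [← hun]
        rw [setIntegral_union hdisj measurableSet_Ioc (huOn 0 a le_rfl (le_trans hab hbap))
          (huOn a b h0 hbap)]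
      rw [this]; ring
    have hvdist : ∀ a b : ℝ, a ∈ Set.Icc (0:ℝ) ap → b ∈ Set.Icc (0:ℝ) ap →
        |v a - v b| ≤ Cu * |a - b| := by
      have base : ∀ a b : ℝ, a ∈ Set.Icc (0:ℝ) ap → b ∈ Set.Icc (0:ℝ) ap → a ≤ b →
          |v b - v a| ≤ Cu * (b - a) := by
        intro a b ha hb hab
        rw [hvsub a b ha.1 hab hb.2]
        have := norm_setIntegral_le_of_norm_le_const (μ := volume) (s := Set.Ioc a b)
          (f := u) (C := Cu) measure_Ioc_lt_top
          (fun l hl => hub l (Set.Ioc_subset_Ioc ha.1 hb.2 hl))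
        rw [Real.volume_real_Ioc_of_le hab] at this
        rw [mul_comm] at this
        rw [mul_comm]
        exact this
      intro a b ha hb
      rcases le_total a b with h | h
      · rw [abs_sub_comm, abs_of_nonpos (by linarith : a - b ≤ 0)]
        have := base a b ha hb h
        calc |v b - v a| ≤ Cu * (b - a) := this
        _ = Cu * -(a-b) := by ring
      · rw [abs_of_nonneg (by linarith : (0:ℝ) ≤ a - b)]
        exact base b a hb ha h
    have hv0 : v (0:ℝ) = 0 := by
      rw [hv_def]
      simp
    have hvb : ∀ a ∈ Set.Icc (0:ℝ) ap, |v a| ≤ Cu * ap := by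
      intro a ha
      have := hvdist a 0 ha ⟨le_refl 0, hap.le⟩
      rw [hv0, sub_zero, sub_zero, abs_of_nonneg ha.1] at this
      calc |v a| ≤ Cu * a := this
      _ ≤ Cu * ap := mul_le_mul_of_nonneg_left ha.2 hCu0
    -- bounds on g
    have hexpb : ∀ a ∈ Set.Icc (0:ℝ) ap, Real.exp (s*a) ≤ E := by
      intro a ha
      apply hEb
      rw [abs_mul]
      apply mul_le_mul_of_nonneg_left _ (abs_nonneg s)
      rw [abs_of_nonneg ha.1]
      exact ha.2
    have hgb : ∀ a ∈ Set.Icc (0:ℝ) ap, ‖g a‖ ≤ MM := by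
      intro a ha
      have h1 : |cphi + v a| ≤ Cg + Cu * ap := by
        calc |cphi + v a| ≤ |cphi| + |v a| := abs_add_le _ _
        _ ≤ Cg + Cu * ap := add_le_add hcphib (hvb a ha)
      calc ‖g a‖ = Real.exp (s*a) * |cphi + v a| := by
            rw [hg_def]
            simp only []
            rw [Real.norm_eq_abs, abs_mul, abs_of_pos (Real.exp_pos _)]
      _ ≤ E * (Cg + Cu * ap) :=
          mul_le_mul (hexpb a ha) h1 (abs_nonneg _) hEpos.le
      _ = MM := hMM.symm
    -- Lipschitz for g
    have hglip : ∀ a b : ℝ, a ∈ Set.Icc (0:ℝ) ap → b ∈ Set.Icc (0:ℝ) ap →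
        |g a - g b| ≤ LL * |a - b| := by
      intro a b ha hb
      have hsa : s * a ≤ |s| * ap := by
        calc s * a ≤ |s * a| := le_abs_self _
        _ = |s| * |a| := abs_mul _ _
        _ ≤ |s| * ap := by
            apply mul_le_mul_of_nonneg_left _ (abs_nonneg s)
            rw [abs_of_nonneg ha.1]; exact ha.2
      have hsb : s * b ≤ |s| * ap := by
        calc s * b ≤ |s * b| := le_abs_self _
        _ = |s| * |b| := abs_mul _ _
        _ ≤ |s| * ap := by
            apply mul_le_mul_of_nonneg_left _ (abs_nonneg s)
            rw [abs_of_nonneg hb.1]; exact hb.2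
      have e1 : |Real.exp (s*a) - Real.exp (s*b)| ≤ E * (|s| * |a - b|) := by
        have := exp_lip hsa hsb
        rw [hE]
        calc |Real.exp (s*a) - Real.exp (s*b)| ≤ Real.exp (|s| * ap) * |s*a - s*b| := this
        _ = Real.exp (|s| * ap) * (|s| * |a - b|) := by
            rw [show s*a - s*b = s*(a-b) by ring, abs_mul]
      have e2 : |cphi + v a| ≤ Cg + Cu * ap := by
        calc |cphi + v a| ≤ |cphi| + |v a| := abs_add_le _ _
        _ ≤ Cg + Cu * ap := add_le_add hcphib (hvb a ha)
      have e3 : |v a - v b| ≤ Cu * |a - b| := hvdist a b ha hb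
      have key2 : g a - g b =
          (Real.exp (s*a) - Real.exp (s*b)) * (cphi + v a) + Real.exp (s*b) * (v a - v b) := by
        rw [hg_def]; ring
      calc |g a - g b| ≤ |(Real.exp (s*a) - Real.exp (s*b)) * (cphi + v a)|
            + |Real.exp (s*b) * (v a - v b)| := by rw [key2]; exact abs_add_le _ _
      _ = |Real.exp (s*a) - Real.exp (s*b)| * |cphi + v a|
            + Real.exp (s*b) * |v a - v b| := by
          rw [abs_mul, abs_mul, abs_of_pos (Real.exp_pos _)]
      _ ≤ (E * (|s| * |a - b|)) * (Cg + Cu * ap) + E * (Cu * |a - b|) := by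
          apply add_le_add
          · exact mul_le_mul e1 e2 (abs_nonneg _) (by positivity)
          · apply mul_le_mul (hexpb b hb) e3 (abs_nonneg _) hEpos.le
      _ = LL * |a - b| := by rw [hLL]; ring
    -- the bounded continuous function
    have hgc : LipschitzWith LLn (fun x : ↥(Set.Icc (0:ℝ) ap) => g x) := by
      apply LipschitzWith.of_dist_le_mul
      intro x y
      rw [Subtype.dist_eq, Real.dist_eq, Real.dist_eq, hLLncoe]
      exact hglip x y x.2 y.2
    refine ⟨BoundedContinuousFunction.ofNormedAddCommGroup
      (fun x : ↥(Set.Icc (0:ℝ) ap) => g x) hgc.continuous MM (fun x => hgb x x.2),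
      ⟨hgc, fun x => hgb x x.2⟩, ?_⟩
    -- T φ = J b
    apply Lp.ext
    have hform : (fun a => Real.exp (s * a) * cphi +
        ∫ l in Set.Ioc 0 a, Real.exp (s * (a - l)) * G l) = g := by
      funext a
      have h1 : ∀ l : ℝ, Real.exp (s * (a - l)) * G l = Real.exp (s*a) * u l := by
        intro l
        rw [hu_def]
        simp only []
        rw [show s*(a-l) = s*a + -(s*l) by ring, Real.exp_add, mul_assoc]
      simp only [h1]
      rw [integral_const_mul]
      rw [hg_def]
      ring
    rw [hform] at hTφ
    have hJb : ((J (BoundedContinuousFunction.ofNormedAddCommGroup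
        (fun x : ↥(Set.Icc (0:ℝ) ap) => g x) hgc.continuous MM (fun x => hgb x x.2))) : ℝ → ℝ)
        =ᵐ[volume.restrict (Set.Ioc (0:ℝ) ap)]
        fun a => g (Set.projIcc 0 ap hap.le a) :=
      BoundedContinuousFunction.coeFn_toLp _ _ _ _
    refine hTφ.trans (EventuallyEq.trans ?_ hJb.symm)
    filter_upwards [hae] with a haa
    rw [Set.projIcc_of_mem hap.le (Set.Ioc_subset_Icc_self haa)]
  -- Arzela-Ascoli
  set A : Set (↥(Set.Icc (0:ℝ) ap) →ᵇ ℝ) :=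
    {b | LipschitzWith LLn b ∧ ∀ x, ‖b x‖ ≤ MM} with hA
  have hAcomp : IsCompact (closure A) := by
    apply BoundedContinuousFunction.arzela_ascoli (Set.Icc (-MM) MM) isCompact_Icc A
    · intro f x hf
      exact abs_le.mp (hf.2 x)
    · intro x
      rw [Metric.equicontinuousAt_iff]
      intro ε hε
      refine ⟨ε / (LL + 1), by positivity, fun y hy b => ?_⟩
      have h1 : dist (b.1 x) (b.1 y) ≤ LL * dist x y := by
        have := b.2.1.dist_le_mul x y
        rwa [hLLncoe] at this
      have h3 : LL * dist x y ≤ LL * (ε / (LL + 1)) := by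
        apply mul_le_mul_of_nonneg_left _ hLL0
        rw [dist_comm]; exact hy.le
      have h4 : LL * (ε / (LL + 1)) < ε := by
        rw [div_eq_inv_mul]
        have hL1 : 0 < LL + 1 := by positivity
        have h5 : LL * (LL+1)⁻¹ < 1 := by
          rw [mul_inv_lt_iff₀ hL1]; linarith
        calc LL * ((LL+1)⁻¹ * ε) = (LL * (LL+1)⁻¹) * ε := by ring
        _ < 1 * ε := by exact mul_lt_mul_of_pos_right h5 hε
        _ = ε := one_mul ε
      exact lt_of_le_of_lt (h1.trans h3) h4
  -- assemble
  refine ⟨J '' closure A, hAcomp.image hJcont, ?_⟩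
  refine mem_of_superset (Metric.closedBall_mem_nhds 0 one_pos) ?_
  intro φ hφ
  have hφ1 : ‖φ‖ ≤ 1 := by
    rwa [Metric.mem_closedBall, dist_zero_right] at hφ
  obtain ⟨b, hbA, hTb⟩ := key φ hφ1
  exact ⟨b, subset_closure hbA, hTb.symm⟩
end

section
/- Let a⁺ > 0, let K : [0, a⁺]² → ℝ be continuous and strictly positive, π : [0, a⁺] → ℝ continuous and strictly positive, and γ : [0, a⁺] → ℝ continuous nonnegative with ∫_0^{a⁺} γ(a) da = 1 and γ ≢ 0. Suppose u ∈ W^{1,1}(0, a⁺) satisfies u'(a) = (∫_0^{a⁺} K(a, a') π(a') u(a') da') (1 − u(a)) for a.e. a ∈ (0, a⁺), the boundary condition u(0) = ∫_0^{a⁺} γ(a) u(a) da, and 0 ≤ u(a) ≤ 1 for all a. Then either u ≡ 0 or u ≡ 1 on [0, a⁺]. -/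
open MeasureTheory Filter Set intervalIntegral

lemma pos_int_of_pos_pt (f : ℝ → ℝ) (a b : ℝ)
    (hc : ContinuousOn f (Set.Icc a b)) (hnn : ∀ x ∈ Set.Icc a b, 0 ≤ f x)
    (x₀ : ℝ) (hx₀ : x₀ ∈ Set.Ioc a b) (hfx : 0 < f x₀) :
    0 < ∫ x in Set.Ioc a b, f x := by
  have hx₀I : x₀ ∈ Set.Icc a b := ⟨hx₀.1.le, hx₀.2⟩
  have hcw : ContinuousWithinAt f (Set.Icc a b) x₀ := hc x₀ hx₀I
  have hev : ∀ᶠ x in nhdsWithin x₀ (Set.Icc a b), f x₀ / 2 < f x :=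
    hcw.eventually_const_lt (by linarith)
  obtain ⟨δ, hδ, hball⟩ := Metric.mem_nhdsWithin_iff.1 hev
  set t := max a (x₀ - δ) with ht
  have htx : t < x₀ := max_lt hx₀.1 (by linarith)
  have hJsub : Set.Ioc t x₀ ⊆ Set.Icc a b := fun x hx =>
    ⟨(le_max_left a _).trans hx.1.le, hx.2.trans hx₀.2⟩
  have hJsub' : Set.Ioc t x₀ ⊆ Set.Ioc a b := fun x hx =>
    ⟨(le_max_left a _).trans_lt hx.1, hx.2.trans hx₀.2⟩
  have hJball : ∀ x ∈ Set.Ioc t x₀, f x₀ / 2 < f x := by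
    intro x hx
    apply hball
    refine ⟨?_, hJsub hx⟩
    rw [Metric.mem_ball, Real.dist_eq, abs_lt]
    have h1 : x₀ - δ ≤ t := le_max_right _ _
    constructor <;> nlinarith [hx.1, hx.2]
  have hfint : IntegrableOn f (Set.Icc a b) := hc.integrableOn_Icc
  have hfintJ : IntegrableOn f (Set.Ioc t x₀) := hfint.mono_set hJsub
  have hfintO : IntegrableOn f (Set.Ioc a b) := hfint.mono_set Set.Ioc_subset_Icc_self
  have step1 : ∫ x in Set.Ioc t x₀, f x ≤ ∫ x in Set.Ioc a b, f x := by
    apply setIntegral_mono_set hfintO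
    · filter_upwards [ae_restrict_mem measurableSet_Ioc] with x hx
      exact hnn x (Set.Ioc_subset_Icc_self hx)
    · exact HasSubset.Subset.eventuallyLE hJsub'
  have step2 : (f x₀ / 2) * (x₀ - t) ≤ ∫ x in Set.Ioc t x₀, f x := by
    have := setIntegral_mono_on (integrableOn_const (by simp [Real.volume_Ioc]))
      hfintJ measurableSet_Ioc (fun x hx => (hJball x hx).le)
      (f := fun _ => f x₀ / 2)
    rw [setIntegral_const] at this
    rw [Real.volume_real_Ioc_of_le htx.le, smul_eq_mul] at this
    linarith [this]
  have : 0 < (f x₀ / 2) * (x₀ - t) := mul_pos (by linarith) (by linarith)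
  linarith

theorem stmt_8 (ap : ℝ) (hap : 0 < ap)
    (gam pf u : ℝ → ℝ) (Kmat : ℝ → ℝ → ℝ)
    (hgamc : ContinuousOn gam (Set.Icc 0 ap)) (hgamnn : ∀ a ∈ Set.Icc 0 ap, 0 ≤ gam a)
    (hgamint : (∫ a in Set.Ioc 0 ap, gam a) = 1)
    (hgamne : ∃ a ∈ Set.Icc 0 ap, gam a ≠ 0)
    (hKc : ContinuousOn (fun p : ℝ × ℝ => Kmat p.1 p.2) (Set.Icc 0 ap ×ˢ Set.Icc 0 ap))
    (hKpos : ∀ a ∈ Set.Icc 0 ap, ∀ a' ∈ Set.Icc 0 ap, 0 < Kmat a a')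
    (hpc : ContinuousOn pf (Set.Icc 0 ap)) (hppos : ∀ a ∈ Set.Icc 0 ap, 0 < pf a)
    (huc : ContinuousOn u (Set.Icc 0 ap))
    (heq : ∀ a ∈ Set.Icc 0 ap, u a = u 0 +
      ∫ t in (0:ℝ)..a, (∫ a' in Set.Ioc 0 ap, Kmat t a' * pf a' * u a') * (1 - u t))
    (hbc : u 0 = ∫ a in Set.Ioc 0 ap, gam a * u a)
    (hbd : ∀ a ∈ Set.Icc 0 ap, 0 ≤ u a ∧ u a ≤ 1) :
    (∀ a ∈ Set.Icc 0 ap, u a = 0) ∨ (∀ a ∈ Set.Icc 0 ap, u a = 1) := by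
  have h0S : (0:ℝ) ∈ Set.Icc 0 ap := ⟨le_refl 0, hap.le⟩
  set F : ℝ → ℝ := fun t => ∫ a' in Set.Ioc 0 ap, Kmat t a' * pf a' * u a' with hFdef
  -- continuity of the inner integrand in a' for fixed t
  have hintc : ∀ t ∈ Set.Icc 0 ap,
      ContinuousOn (fun a' => Kmat t a' * pf a' * u a') (Set.Icc 0 ap) := by
    intro t ht
    have h1 : ContinuousOn (fun a' => Kmat t a') (Set.Icc 0 ap) :=
      hKc.comp ((continuous_const.prodMk continuous_id).continuousOn)
        (fun a' ha' => Set.mk_mem_prod ht ha')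
    exact (h1.mul hpc).mul huc
  -- continuity of F
  have hFc : ContinuousOn F (Set.Icc 0 ap) := by
    obtain ⟨CK, hCK⟩ := (isCompact_Icc.prod isCompact_Icc).exists_bound_of_continuousOn hKc
    obtain ⟨Cp, hCp⟩ := isCompact_Icc.exists_bound_of_continuousOn hpc
    apply continuousOn_of_dominated (bound := fun _ => CK * Cp)
    · intro t ht
      exact ((hintc t ht).mono Set.Ioc_subset_Icc_self).aestronglyMeasurable measurableSet_Ioc
    · intro t ht
      filter_upwards [ae_restrict_mem measurableSet_Ioc] with a' ha'
      have ha'I : a' ∈ Set.Icc 0 ap := Set.Ioc_subset_Icc_self ha'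
      have h1 : ‖Kmat t a'‖ ≤ CK := hCK (t, a') (Set.mk_mem_prod ht ha'I)
      have h2 : ‖pf a'‖ ≤ Cp := hCp a' ha'I
      have h3 : |u a'| ≤ 1 := by
        rw [abs_le]; exact ⟨by linarith [(hbd a' ha'I).1], (hbd a' ha'I).2⟩
      have hCKnn : 0 ≤ CK := (norm_nonneg _).trans h1
      have hCpnn : 0 ≤ Cp := (norm_nonneg _).trans h2
      calc ‖Kmat t a' * pf a' * u a'‖ = |Kmat t a'| * |pf a'| * |u a'| := by
            simp [abs_mul, Real.norm_eq_abs]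
        _ ≤ CK * Cp * 1 := by
            apply mul_le_mul _ h3 (abs_nonneg _) (by positivity)
            exact mul_le_mul h1 h2 (abs_nonneg _) hCKnn
        _ = CK * Cp := mul_one _
    · exact integrableOn_const (C := CK * Cp) (by simp [Real.volume_Ioc])
    · filter_upwards [ae_restrict_mem measurableSet_Ioc] with a' ha'
      have ha'I : a' ∈ Set.Icc 0 ap := Set.Ioc_subset_Icc_self ha'
      have h1 : ContinuousOn (fun t => Kmat t a') (Set.Icc 0 ap) :=
        hKc.comp ((continuous_id.prodMk continuous_const).continuousOn)
          (fun t ht => Set.mk_mem_prod ht ha'I)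
      exact (h1.mul continuousOn_const).mul continuousOn_const
  have hgc : ContinuousOn (fun t => F t * (1 - u t)) (Set.Icc 0 ap) :=
    hFc.mul (continuousOn_const.sub huc)
  have hgnn : ∀ t ∈ Set.Icc 0 ap, 0 ≤ F t * (1 - u t) := by
    intro t ht
    apply mul_nonneg
    · apply setIntegral_nonneg measurableSet_Ioc
      intro a' ha'
      have ha'I : a' ∈ Set.Icc 0 ap := Set.Ioc_subset_Icc_self ha'
      exact mul_nonneg (mul_pos (hKpos t ht a' ha'I) (hppos a' ha'I)).le (hbd a' ha'I).1
    · linarith [(hbd t ht).2]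
  have huIcc : Set.uIcc (0:ℝ) ap = Set.Icc 0 ap := Set.uIcc_of_le hap.le
  have hgint : IntervalIntegrable (fun t => F t * (1 - u t)) volume 0 ap := by
    apply ContinuousOn.intervalIntegrable
    rwa [huIcc]
  have hudiff : ∀ a b : ℝ, a ∈ Set.Icc 0 ap → b ∈ Set.Icc 0 ap → b ≤ a →
      u a - u b = ∫ t in b..a, F t * (1 - u t) := by
    intro a b ha hb hba
    have h1 : IntervalIntegrable (fun t => F t * (1 - u t)) volume 0 a := by
      apply hgint.mono_set
      rw [huIcc, Set.uIcc_of_le ha.1]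
      exact Set.Icc_subset_Icc le_rfl ha.2
    have h2 : IntervalIntegrable (fun t => F t * (1 - u t)) volume 0 b := by
      apply hgint.mono_set
      rw [huIcc, Set.uIcc_of_le hb.1]
      exact Set.Icc_subset_Icc le_rfl hb.2
    rw [heq a ha, heq b hb]
    have := intervalIntegral.integral_interval_sub_left h1 h2
    simp only [hFdef] at this ⊢
    linarith [this]
  have hmono : ∀ a b : ℝ, b ∈ Set.Icc 0 ap → a ∈ Set.Icc 0 ap → b ≤ a → u b ≤ u a := by
    intro a b hb ha hba
    have h1 := hudiff a b ha hb hba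
    have h2 : 0 ≤ ∫ t in b..a, F t * (1 - u t) :=
      intervalIntegral.integral_nonneg hba
        (fun x hx => hgnn x ⟨hb.1.trans hx.1, hx.2.trans ha.2⟩)
    linarith
  -- existence of a point in Ioc where gam is positive
  obtain ⟨a₂, ha₂I, ha₂pos⟩ : ∃ a₂ ∈ Set.Ioc 0 ap, 0 < gam a₂ := by
    by_contra h; push_neg at h
    have : (∫ a in Set.Ioc 0 ap, gam a) = 0 := by
      rw [setIntegral_congr_fun measurableSet_Ioc
        (g := fun _ => (0:ℝ)) (fun x hx => le_antisymm (h x hx) (hgamnn x (Set.Ioc_subset_Icc_self hx)))]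
      simp
    rw [hgamint] at this; norm_num at this
  have ha₂Icc : a₂ ∈ Set.Icc 0 ap := Set.Ioc_subset_Icc_self ha₂I
  -- gam * (u - u 0) integrates to zero
  have hgamu_int : IntegrableOn (fun a => gam a * u a) (Set.Ioc 0 ap) :=
    ((hgamc.mul huc).integrableOn_Icc).mono_set Set.Ioc_subset_Icc_self
  have hgam_int : IntegrableOn gam (Set.Ioc 0 ap) :=
    (hgamc.integrableOn_Icc).mono_set Set.Ioc_subset_Icc_self
  have hzero : (∫ a in Set.Ioc 0 ap, gam a * (u a - u 0)) = 0 := by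
    have heqf : (fun a => gam a * (u a - u 0)) = fun a => gam a * u a - u 0 * gam a := by
      funext a; ring
    rw [heqf, integral_sub hgamu_int (hgam_int.const_mul _), MeasureTheory.integral_const_mul, hgamint, ← hbc]
    ring
  have hsubnn : ∀ x ∈ Set.Icc 0 ap, 0 ≤ gam x * (u x - u 0) := fun x hx =>
    mul_nonneg (hgamnn x hx) (sub_nonneg.2 (hmono x 0 h0S hx hx.1))
  have hpt : ∀ x ∈ Set.Ioc 0 ap, gam x * (u x - u 0) = 0 := by
    intro x hx
    by_contra hne
    have hpos : 0 < gam x * (u x - u 0) :=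
      (hsubnn x (Set.Ioc_subset_Icc_self hx)).lt_of_ne (Ne.symm hne)
    have := pos_int_of_pos_pt (fun a => gam a * (u a - u 0)) 0 ap
      (hgamc.mul (huc.sub continuousOn_const)) hsubnn x hx hpos
    rw [hzero] at this; exact lt_irrefl 0 this
  have hua₂ : u a₂ = u 0 := by
    have h1 := hpt a₂ ha₂I
    rcases mul_eq_zero.1 h1 with h | h
    · exact absurd h ha₂pos.ne'
    · linarith
  -- g vanishes on Ioc 0 a₂
  have hgzero : F a₂ * (1 - u a₂) = 0 := by
    have hint0 : (∫ t in Set.Ioc 0 a₂, F t * (1 - u t)) = 0 := by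
      have h1 := hudiff a₂ 0 ha₂Icc h0S ha₂I.1.le
      rw [hua₂, sub_self] at h1
      rw [← intervalIntegral.integral_of_le ha₂I.1.le, ← h1]
    by_contra hne
    have hpos : 0 < F a₂ * (1 - u a₂) := (hgnn a₂ ha₂Icc).lt_of_ne (Ne.symm hne)
    have := pos_int_of_pos_pt (fun t => F t * (1 - u t)) 0 a₂
      (hgc.mono (Set.Icc_subset_Icc le_rfl ha₂Icc.2))
      (fun y hy => hgnn y (Set.Icc_subset_Icc le_rfl ha₂Icc.2 hy))
      a₂ ⟨ha₂I.1, le_refl a₂⟩ hpos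
    rw [hint0] at this; exact lt_irrefl 0 this
  -- F a₂ is positive given ∫ u > 0
  have hFa₂ : (0 < ∫ a' in Set.Ioc 0 ap, u a') → 0 < F a₂ := by
    intro hI
    obtain ⟨a₀, ha₀, hmin⟩ := isCompact_Icc.exists_isMinOn (Set.nonempty_Icc.2 hap.le)
      ((hKc.comp ((continuous_const.prodMk continuous_id).continuousOn)
        (fun a' ha' => Set.mk_mem_prod ha₂Icc ha')).mul hpc)
    set m := Kmat a₂ a₀ * pf a₀ with hm
    have hmpos : 0 < m := mul_pos (hKpos a₂ ha₂Icc a₀ ha₀) (hppos a₀ ha₀)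
    have hle : m * ∫ a' in Set.Ioc 0 ap, u a' ≤ F a₂ := by
      rw [← MeasureTheory.integral_const_mul]
      apply setIntegral_mono_on
      · exact ((huc.integrableOn_Icc).mono_set Set.Ioc_subset_Icc_self).const_mul m
      · exact ((hintc a₂ ha₂Icc).integrableOn_Icc).mono_set Set.Ioc_subset_Icc_self
      · exact measurableSet_Ioc
      · intro x hx
        have hxI : x ∈ Set.Icc 0 ap := Set.Ioc_subset_Icc_self hx
        have := hmin hxI
        exact mul_le_mul_of_nonneg_right this (hbd x hxI).1
    nlinarith [mul_pos hmpos hI]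
  -- case split on u 0
  rcases eq_or_lt_of_le (hbd 0 h0S).1 with hu0 | hu0
  · left
    by_contra hcon; push_neg at hcon
    obtain ⟨a₁, ha₁, hne⟩ := hcon
    have hu₁pos : 0 < u a₁ := (hbd a₁ ha₁).1.lt_of_ne (Ne.symm hne)
    have ha₁0 : 0 < a₁ := by
      rcases ha₁.1.lt_or_eq with h | h
      · exact h
      · exfalso; rw [← h] at hu₁pos; linarith
    have hI : 0 < ∫ a' in Set.Ioc 0 ap, u a' :=
      pos_int_of_pos_pt u 0 ap huc (fun x hx => (hbd x hx).1) a₁ ⟨ha₁0, ha₁.2⟩ hu₁pos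
    have hF := hFa₂ hI
    rw [hua₂, ← hu0] at hgzero
    simp at hgzero
    linarith
  · right
    have hI : 0 < ∫ a' in Set.Ioc 0 ap, u a' :=
      pos_int_of_pos_pt u 0 ap huc (fun x hx => (hbd x hx).1) a₂ ha₂I (by rw [hua₂]; exact hu0)
    have hF := hFa₂ hI
    have hu01 : u 0 = 1 := by
      rcases mul_eq_zero.1 hgzero with h | h
      · linarith
      · rw [← hua₂]; linarith
    intro a ha
    have h1 := hmono a 0 h0S ha ha.1
    linarith [(hbd a ha).2]
end

section
/- In the setting of the previous steady-state problem, if u ∈ W^{1,1}(0, a⁺) is a solution with 0 ≤ u ≤ 1 and u(a₀) = 1 for some a₀ ∈ [0, a⁺], then u ≡ 1 on [0, a⁺]. -/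
open MeasureTheory Filter Set intervalIntegral Topology

theorem stmt_9 (ap : ℝ) (hap : 0 < ap)
    (gam pf u : ℝ → ℝ) (Kmat : ℝ → ℝ → ℝ)
    (hgamc : ContinuousOn gam (Set.Icc 0 ap)) (hgamnn : ∀ a ∈ Set.Icc 0 ap, 0 ≤ gam a)
    (hgamint : (∫ a in Set.Ioc 0 ap, gam a) = 1)
    (hKc : ContinuousOn (fun p : ℝ × ℝ => Kmat p.1 p.2) (Set.Icc 0 ap ×ˢ Set.Icc 0 ap))
    (hKpos : ∀ a ∈ Set.Icc 0 ap, ∀ a' ∈ Set.Icc 0 ap, 0 < Kmat a a')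
    (hpc : ContinuousOn pf (Set.Icc 0 ap)) (hppos : ∀ a ∈ Set.Icc 0 ap, 0 < pf a)
    (huc : ContinuousOn u (Set.Icc 0 ap))
    (heq : ∀ a ∈ Set.Icc 0 ap, u a = u 0 +
      ∫ t in (0:ℝ)..a, (∫ a' in Set.Ioc 0 ap, Kmat t a' * pf a' * u a') * (1 - u t))
    (hbc : u 0 = ∫ a in Set.Ioc 0 ap, gam a * u a)
    (hbd : ∀ a ∈ Set.Icc 0 ap, 0 ≤ u a ∧ u a ≤ 1)
    (a₀ : ℝ) (ha₀ : a₀ ∈ Set.Icc 0 ap) (hu1 : u a₀ = 1) :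
    ∀ a ∈ Set.Icc 0 ap, u a = 1 := by
  have haple : (0:ℝ) ≤ ap := hap.le
  set proj : ℝ → ℝ := fun t => max 0 (min t ap) with hproj
  have hprojmem : ∀ t, proj t ∈ Icc 0 ap :=
    fun t => ⟨le_max_left _ _, max_le haple (min_le_right _ _)⟩
  have hprojid : ∀ t ∈ Icc 0 ap, proj t = t := by
    intro t ht
    simp [hproj, min_eq_left ht.2, max_eq_right ht.1]
  have hprojc : Continuous proj := continuous_const.max (continuous_id.min continuous_const)
  obtain ⟨CK, hCK⟩ := (isCompact_Icc.prod isCompact_Icc).exists_bound_of_continuousOn hKc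
  obtain ⟨Cp, hCp⟩ := isCompact_Icc.exists_bound_of_continuousOn hpc
  have hCK0 : 0 ≤ CK :=
    le_trans (norm_nonneg _) (hCK (0, 0) ⟨⟨le_refl 0, haple⟩, ⟨le_refl 0, haple⟩⟩)
  have hCp0 : 0 ≤ Cp := le_trans (norm_nonneg _) (hCp 0 ⟨le_refl 0, haple⟩)
  set M := CK * Cp * ap with hM
  have hM0 : 0 ≤ M := by positivity
  set F : ℝ → ℝ := fun t => ∫ a' in Ioc 0 ap, Kmat t a' * pf a' * u a' with hF
  have hintc : ∀ t ∈ Icc 0 ap,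
      ContinuousOn (fun a' => Kmat t a' * pf a' * u a') (Icc 0 ap) := by
    intro t ht
    have h1 : ContinuousOn (fun a' => Kmat t a') (Icc 0 ap) :=
      hKc.comp ((Continuous.prodMk_right t).continuousOn) (fun a' ha' => ⟨ht, ha'⟩)
    exact (h1.mul hpc).mul huc
  have hintbd : ∀ t ∈ Icc 0 ap, ∀ a' ∈ Icc 0 ap,
      ‖Kmat t a' * pf a' * u a'‖ ≤ CK * Cp := by
    intro t ht a' ha'
    have h1 : ‖Kmat t a'‖ ≤ CK := hCK (t, a') ⟨ht, ha'⟩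
    have h2 : ‖pf a'‖ ≤ Cp := hCp a' ha'
    have h3 : ‖u a'‖ ≤ 1 := by
      rw [Real.norm_eq_abs, abs_le]
      exact ⟨by linarith [(hbd a' ha').1], (hbd a' ha').2⟩
    calc ‖Kmat t a' * pf a' * u a'‖ = ‖Kmat t a'‖ * ‖pf a'‖ * ‖u a'‖ := by
          rw [norm_mul, norm_mul]
      _ ≤ CK * Cp * 1 := by
          apply mul_le_mul _ h3 (norm_nonneg _) (by positivity)
          exact mul_le_mul h1 h2 (norm_nonneg _) hCK0
      _ = CK * Cp := mul_one _
  have hFmeas : ∀ t ∈ Icc 0 ap,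
      AEStronglyMeasurable (fun a' => Kmat t a' * pf a' * u a')
        (volume.restrict (Ioc 0 ap)) := fun t ht =>
    ((hintc t ht).mono Ioc_subset_Icc_self).aestronglyMeasurable measurableSet_Ioc
  have hvol : volume (Ioc (0:ℝ) ap) < ⊤ := by
    rw [Real.volume_Ioc]; exact ENNReal.ofReal_lt_top
  have hvolr : (volume (Ioc (0:ℝ) ap)).toReal = ap := by
    rw [Real.volume_Ioc, ENNReal.toReal_ofReal (by linarith)]
    ring
  have hFb : ∀ t ∈ Icc 0 ap, ‖F t‖ ≤ M := by
    intro t ht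
    have h := norm_setIntegral_le_of_norm_le_const hvol
      (fun x hx => hintbd t ht x (Ioc_subset_Icc_self hx))
    rw [measureReal_def, hvolr] at h
    calc ‖F t‖ ≤ CK * Cp * ap := h
      _ = M := rfl
  have hFc : ContinuousOn F (Icc 0 ap) := by
    apply continuousOn_of_dominated hFmeas (bound := fun _ => CK * Cp)
    · intro t ht
      filter_upwards [ae_restrict_mem measurableSet_Ioc] with x hx
      exact hintbd t ht x (Ioc_subset_Icc_self hx)
    · exact (integrableOn_const hvol.ne)
    · filter_upwards [ae_restrict_mem measurableSet_Ioc] with x hx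
      have h1 : ContinuousOn (fun t => Kmat t x) (Icc 0 ap) :=
        hKc.comp ((continuous_id.prodMk continuous_const).continuousOn)
          (fun t ht => ⟨ht, Ioc_subset_Icc_self hx⟩)
      exact (h1.mul continuousOn_const).mul continuousOn_const
  set G : ℝ → ℝ := fun t => F (proj t) * (1 - u (proj t)) with hG
  have hGc : Continuous G := by
    have h : ContinuousOn (fun t => F t * (1 - u t)) (Icc 0 ap) :=
      hFc.mul (continuousOn_const.sub huc)
    exact h.comp_continuous hprojc hprojmem
  set U : ℝ → ℝ := fun a => u 0 + ∫ t in (0:ℝ)..a, G t with hU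
  have hU' : ∀ t, HasDerivAt U (G t) t := fun t =>
    ((hGc.integral_hasStrictDerivAt 0 t).hasDerivAt).const_add (u 0)
  have huU : ∀ a ∈ Icc 0 ap, u a = U a := by
    intro a ha
    rw [heq a ha, hU]
    congr 1
    apply intervalIntegral.integral_congr
    intro x hx
    rw [uIcc_of_le ha.1] at hx
    have hx' : x ∈ Icc 0 ap := ⟨hx.1, hx.2.trans ha.2⟩
    simp [hG, hprojid x hx', hF]
  set vf : ℝ → ℝ → ℝ := fun t x => F (proj t) * (1 - x) with hvf
  have hlip : ∀ t, LipschitzOnWith M.toNNReal (vf t) univ := by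
    intro t
    apply LipschitzWith.lipschitzOnWith
    apply LipschitzWith.of_dist_le_mul
    intro x y
    have hd : vf t x - vf t y = F (proj t) * (y - x) := by simp [hvf]; ring
    rw [Real.dist_eq, Real.dist_eq, hd, abs_mul]
    have hb := hFb (proj t) (hprojmem t)
    rw [Real.norm_eq_abs] at hb
    calc |F (proj t)| * |y - x| ≤ M * |y - x| :=
          mul_le_mul_of_nonneg_right hb (abs_nonneg _)
      _ = ↑M.toNNReal * |x - y| := by
          rw [Real.coe_toNNReal M hM0, abs_sub_comm]
  have hGvf : ∀ t ∈ Icc 0 ap, G t = vf t (u t) := by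
    intro t ht
    simp [hG, hvf, hprojid t ht]
  have hderR : ∀ t ∈ Ico a₀ ap, HasDerivWithinAt u (vf t (u t)) (Ici t) t := by
    intro t ht
    have ht' : t ∈ Icc 0 ap := ⟨ha₀.1.trans ht.1, ht.2.le⟩
    have hmem : Icc 0 ap ∈ 𝓝[Ici t] t := by
      have h1 : Iio ap ∈ 𝓝[Ici t] t := mem_nhdsWithin_of_mem_nhds (Iio_mem_nhds ht.2)
      have h2 := Filter.inter_mem self_mem_nhdsWithin h1
      exact Filter.mem_of_superset h2 (fun x hx => ⟨ht'.1.trans hx.1, hx.2.le⟩)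
    have hee : u =ᶠ[𝓝[Ici t] t] U := Filter.eventuallyEq_of_mem hmem huU
    have hd := ((hU' t).hasDerivWithinAt (s := Ici t)).congr_of_eventuallyEq hee (huU t ht')
    rwa [hGvf t ht'] at hd
  have hderL : ∀ t ∈ Ioc 0 a₀, HasDerivWithinAt u (vf t (u t)) (Iic t) t := by
    intro t ht
    have ht' : t ∈ Icc 0 ap := ⟨ht.1.le, ht.2.trans ha₀.2⟩
    have hmem : Icc 0 ap ∈ 𝓝[Iic t] t := by
      have h1 : Ioi (0:ℝ) ∈ 𝓝[Iic t] t := mem_nhdsWithin_of_mem_nhds (Ioi_mem_nhds ht.1)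
      have h2 := Filter.inter_mem self_mem_nhdsWithin h1
      exact Filter.mem_of_superset h2 (fun x hx => ⟨hx.2.le, hx.1.trans ht'.2⟩)
    have hee : u =ᶠ[𝓝[Iic t] t] U := Filter.eventuallyEq_of_mem hmem huU
    have hd := ((hU' t).hasDerivWithinAt (s := Iic t)).congr_of_eventuallyEq hee (huU t ht')
    rwa [hGvf t ht'] at hd
  have hcder : ∀ (t : ℝ) (s : Set ℝ),
      HasDerivWithinAt (fun _ : ℝ => (1:ℝ)) (vf t ((fun _ : ℝ => (1:ℝ)) t)) s t := by
    intro t s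
    have h : vf t (1:ℝ) = 0 := by simp [hvf]
    rw [h]
    exact hasDerivWithinAt_const t s 1
  have honeR : EqOn u (fun _ => (1:ℝ)) (Icc a₀ ap) :=
    ODE_solution_unique_of_mem_Icc_right (s := fun _ => univ) (fun t _ => hlip t)
      (huc.mono (Icc_subset_Icc_left ha₀.1)) hderR (fun _ _ => mem_univ _)
      continuousOn_const (fun t _ => hcder t (Ici t)) (fun _ _ => mem_univ _)
      (by simpa using hu1)
  have honeL : EqOn u (fun _ => (1:ℝ)) (Icc 0 a₀) :=
    ODE_solution_unique_of_mem_Icc_left (s := fun _ => univ) (fun t _ => hlip t)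
      (huc.mono (Icc_subset_Icc_right ha₀.2)) hderL (fun _ _ => mem_univ _)
      continuousOn_const (fun t _ => hcder t (Iic t)) (fun _ _ => mem_univ _)
      (by simpa using hu1)
  intro a ha
  rcases le_total a a₀ with h | h
  · exact honeL ⟨ha.1, h⟩
  · exact honeR ⟨h, ha.2⟩
end

section
/- In the setting of the steady-state problem, if u ∈ W^{1,1}(0, a⁺) is a solution with 0 ≤ u ≤ 1 and u(a₀) = 0 for some a₀ ∈ (0, a⁺], then u ≡ 0 on [0, a⁺]. (If u(0) = 0, the boundary condition and γ ≢ 0 produce an interior zero, reducing to the same conclusion.) -/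
open MeasureTheory Filter Set intervalIntegral

theorem stmt_10 (ap : ℝ) (hap : 0 < ap)
    (gam pf u : ℝ → ℝ) (Kmat : ℝ → ℝ → ℝ)
    (hgamc : ContinuousOn gam (Set.Icc 0 ap)) (hgamnn : ∀ a ∈ Set.Icc 0 ap, 0 ≤ gam a)
    (hgamint : (∫ a in Set.Ioc 0 ap, gam a) = 1)
    (hgamne : ∃ a ∈ Set.Icc 0 ap, gam a ≠ 0)
    (hKc : ContinuousOn (fun p : ℝ × ℝ => Kmat p.1 p.2) (Set.Icc 0 ap ×ˢ Set.Icc 0 ap))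
    (hKpos : ∀ a ∈ Set.Icc 0 ap, ∀ a' ∈ Set.Icc 0 ap, 0 < Kmat a a')
    (hpc : ContinuousOn pf (Set.Icc 0 ap)) (hppos : ∀ a ∈ Set.Icc 0 ap, 0 < pf a)
    (huc : ContinuousOn u (Set.Icc 0 ap))
    (heq : ∀ a ∈ Set.Icc 0 ap, u a = u 0 +
      ∫ t in (0:ℝ)..a, (∫ a' in Set.Ioc 0 ap, Kmat t a' * pf a' * u a') * (1 - u t))
    (hbc : u 0 = ∫ a in Set.Ioc 0 ap, gam a * u a)
    (hbd : ∀ a ∈ Set.Icc 0 ap, 0 ≤ u a ∧ u a ≤ 1)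
    (a₀ : ℝ) (ha₀ : a₀ ∈ Set.Ioc 0 ap) (hu0 : u a₀ = 0) :
    ∀ a ∈ Set.Icc 0 ap, u a = 0 := by
  have hIocIcc : Set.Ioc (0:ℝ) ap ⊆ Set.Icc 0 ap := Set.Ioc_subset_Icc_self
  set lam : ℝ → ℝ := fun t => ∫ a' in Set.Ioc 0 ap, Kmat t a' * pf a' * u a' with hlamdef
  set F : ℝ → ℝ := fun t => lam t * (1 - u t) with hFdef
  clear_value lam F
  have hsq : MeasurableSet (Set.Icc (0:ℝ) ap) := measurableSet_Icc
  have hlamnn : ∀ t ∈ Set.Icc 0 ap, 0 ≤ lam t := by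
    intro t ht
    simp only [hlamdef]
    exact setIntegral_nonneg measurableSet_Ioc fun a' ha' =>
      mul_nonneg (mul_nonneg (hKpos t ht a' (hIocIcc ha')).le (hppos a' (hIocIcc ha')).le)
        (hbd a' (hIocIcc ha')).1
  have hFnn : ∀ t ∈ Set.Icc 0 ap, 0 ≤ F t := by
    intro t ht
    simp only [hFdef]
    exact mul_nonneg (hlamnn t ht) (by linarith [(hbd t ht).2])
  have heq' : ∀ a ∈ Set.Icc 0 ap, u a = u 0 + ∫ t in (0:ℝ)..a, F t := by
    exact heq
  have ha₀Icc : a₀ ∈ Set.Icc 0 ap := hIocIcc ha₀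
  have hInn : 0 ≤ ∫ t in (0:ℝ)..a₀, F t :=
    intervalIntegral.integral_nonneg ha₀.1.le fun t ht => hFnn t ⟨ht.1, ht.2.trans ha₀.2⟩
  have h0Icc : (0:ℝ) ∈ Set.Icc (0:ℝ) ap := ⟨le_rfl, hap.le⟩
  have hkey := heq' a₀ ha₀Icc
  rw [hu0] at hkey
  have hu00 : u 0 = 0 := by linarith [(hbd 0 h0Icc).1]
  have hI0 : (∫ t in (0:ℝ)..a₀, F t) = 0 := by linarith
  -- integrability of F
  have hgc : ContinuousOn (fun p : ℝ × ℝ => Kmat p.1 p.2 * pf p.2 * u p.2)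
      (Set.Icc 0 ap ×ˢ Set.Icc 0 ap) :=
    (hKc.mul (hpc.comp continuous_snd.continuousOn fun p hp => hp.2)).mul
      (huc.comp continuous_snd.continuousOn fun p hp => hp.2)
  have hgm : AEStronglyMeasurable (fun p : ℝ × ℝ => Kmat p.1 p.2 * pf p.2 * u p.2)
      ((volume.restrict (Set.Icc 0 ap)).prod (volume.restrict (Set.Ioc 0 ap))) := by
    have h1 := hgc.aestronglyMeasurable (μ := volume.prod volume) (hsq.prod hsq)
    rw [Measure.prod_restrict]
    exact h1.mono_measure (Measure.restrict_mono (Set.prod_mono subset_rfl hIocIcc) le_rfl)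
  have hlamm : AEStronglyMeasurable lam (volume.restrict (Set.Icc 0 ap)) := by
    rw [hlamdef]
    exact hgm.integral_prod_right'
  obtain ⟨M, hM⟩ := (isCompact_Icc.prod isCompact_Icc).exists_bound_of_continuousOn hgc
  have hmeasIoc : volume (Set.Ioc (0:ℝ) ap) < ⊤ := by simp [Real.volume_Ioc]
  have hlambd : ∀ t ∈ Set.Icc 0 ap, ‖lam t‖ ≤ M * (volume (Set.Ioc (0:ℝ) ap)).toReal := by
    intro t ht
    simp only [hlamdef]
    refine norm_setIntegral_le_of_norm_le_const_ae' hmeasIoc ?_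
    exact Eventually.of_forall fun a' ha' => hM (t, a') (Set.mk_mem_prod ht (hIocIcc ha'))
  have hum : AEStronglyMeasurable u (volume.restrict (Set.Icc 0 ap)) :=
    huc.aestronglyMeasurable hsq
  have hFm : AEStronglyMeasurable F (volume.restrict (Set.Icc 0 ap)) := by
    rw [hFdef]
    exact hlamm.mul ((aestronglyMeasurable_const (b := (1:ℝ))).sub hum)
  have hFint : IntegrableOn F (Set.Icc 0 ap) := by
    refine ⟨hFm, HasFiniteIntegral.restrict_of_bounded
      (C := M * (volume (Set.Ioc (0:ℝ) ap)).toReal) (by simp [Real.volume_Icc]) ?_⟩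
    refine (ae_restrict_iff' hsq).2 (Eventually.of_forall fun t ht => ?_)
    have hb := hbd t ht
    have h2 : ‖(1 : ℝ) - u t‖ ≤ 1 := by
      rw [Real.norm_eq_abs, abs_of_nonneg (by linarith)]; linarith
    calc ‖F t‖ = ‖lam t‖ * ‖1 - u t‖ := by rw [hFdef]; exact norm_mul _ _
      _ ≤ (M * (volume (Set.Ioc (0:ℝ) ap)).toReal) * 1 :=
        mul_le_mul (hlambd t ht) h2 (norm_nonneg _) ((norm_nonneg _).trans (hlambd t ht))
      _ = M * (volume (Set.Ioc (0:ℝ) ap)).toReal := mul_one _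
  have hFint0 : IntegrableOn F (Set.Ioc 0 a₀) :=
    hFint.mono_set fun x hx => ⟨hx.1.le, hx.2.trans ha₀.2⟩
  have hFae : F =ᵐ[volume.restrict (Set.Ioc 0 a₀)] 0 := by
    have hnn : 0 ≤ᵐ[volume.restrict (Set.Ioc 0 a₀)] F :=
      (ae_restrict_iff' measurableSet_Ioc).2 (Eventually.of_forall fun t ht =>
        hFnn t ⟨ht.1.le, ht.2.trans ha₀.2⟩)
    have hI : (∫ t in Set.Ioc 0 a₀, F t) = 0 := by
      rw [← intervalIntegral.integral_of_le ha₀.1.le]; exact hI0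
    exact (MeasureTheory.integral_eq_zero_iff_of_nonneg_ae hnn hFint0).1 hI
  -- find t₀ close to 0 with F t₀ = 0 and u t₀ < 1
  obtain ⟨δ, hδpos, hδ⟩ := Metric.continuousWithinAt_iff.1 (huc 0 h0Icc) (1/2) (by norm_num)
  set c := min (δ/2) a₀ with hc
  have hcpos : 0 < c := lt_min (by linarith) ha₀.1
  have hsubc : Set.Ioc 0 c ⊆ Set.Ioc 0 a₀ := Set.Ioc_subset_Ioc le_rfl (min_le_right _ _)
  have hNnull : volume ({t | F t ≠ 0} ∩ Set.Ioc 0 a₀) = 0 := by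
    have h := hFae
    rw [EventuallyEq, ae_iff, Measure.restrict_apply' measurableSet_Ioc] at h
    simpa using h
  have hpos : volume (Set.Ioc (0:ℝ) c \ {t | F t ≠ 0}) ≠ 0 := by
    have h1 : volume (Set.Ioc (0:ℝ) c ∩ {t | F t ≠ 0}) = 0 := by
      refine measure_mono_null ?_ hNnull
      intro x hx
      exact ⟨hx.2, hsubc hx.1⟩
    have h3 : volume (Set.Ioc (0:ℝ) c) ≤
        volume (Set.Ioc (0:ℝ) c \ {t | F t ≠ 0}) + volume (Set.Ioc (0:ℝ) c ∩ {t | F t ≠ 0}) := by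
      refine le_trans (measure_mono ?_) (measure_union_le _ _)
      intro x hx
      by_cases hxN : x ∈ {t | F t ≠ 0}
      · exact Or.inr ⟨hx, hxN⟩
      · exact Or.inl ⟨hx, hxN⟩
    intro hz
    rw [hz, h1, add_zero, Real.volume_Ioc] at h3
    simp only [nonpos_iff_eq_zero, ENNReal.ofReal_eq_zero, sub_zero] at h3
    linarith
  obtain ⟨t₀, ht₀⟩ := nonempty_of_measure_ne_zero hpos
  have ht₀Ioc : t₀ ∈ Set.Ioc (0:ℝ) c := ht₀.1
  have ht₀Icc : t₀ ∈ Set.Icc 0 ap :=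
    ⟨ht₀Ioc.1.le, le_trans (ht₀Ioc.2.trans (min_le_right _ _)) ha₀.2⟩
  have hF0 : F t₀ = 0 := by
    by_contra h; exact ht₀.2 h
  have hut₀ : u t₀ < 1/2 := by
    have hd : dist t₀ 0 < δ := by
      rw [Real.dist_eq, sub_zero, abs_of_pos ht₀Ioc.1]
      exact lt_of_le_of_lt (ht₀Ioc.2.trans (min_le_left _ _)) (by linarith)
    have h := hδ ht₀Icc hd
    rw [hu00, Real.dist_eq, sub_zero] at h
    exact lt_of_le_of_lt (le_abs_self _) h
  have hlam0 : lam t₀ = 0 := by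
    rw [hFdef] at hF0
    simp only at hF0
    rcases mul_eq_zero.1 hF0 with h | h
    · exact h
    · exfalso; linarith
  -- conclude
  intro a ha
  by_contra hne
  have hua : 0 < u a := lt_of_le_of_ne (hbd a ha).1 (Ne.symm hne)
  have hapos : 0 < a := by
    rcases lt_or_eq_of_le ha.1 with h | h
    · exact h
    · exact absurd (by rw [← h]; exact hu00) hne
  obtain ⟨ρ, hρpos, hρ⟩ := Metric.continuousWithinAt_iff.1 (huc a ha) (u a / 2) (by positivity)
  set η := min (ρ/2) (a/2) with hη
  have hηpos : 0 < η := lt_min (by linarith) (by linarith)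
  have hηa : η ≤ a/2 := min_le_right _ _
  have hIsub : Set.Icc (a - η) a ⊆ Set.Ioc 0 ap := by
    intro x hx
    exact ⟨by linarith [hx.1], hx.2.trans ha.2⟩
  have hul : ∀ x ∈ Set.Icc (a - η) a, u a / 2 ≤ u x := by
    intro x hx
    have hxIcc : x ∈ Set.Icc 0 ap := hIocIcc (hIsub hx)
    have hd : dist x a < ρ := by
      rw [Real.dist_eq, abs_lt]
      constructor
      · have := min_le_left (ρ/2) (a/2); linarith [hx.1]
      · linarith [hx.2, hρpos]
    have h := hρ hxIcc hd
    rw [Real.dist_eq] at h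
    have h' := abs_lt.1 h
    linarith [h'.1]
  have hφc : ContinuousOn (fun a' => Kmat t₀ a' * pf a') (Set.Icc 0 ap) := by
    refine ContinuousOn.mul ?_ hpc
    exact hKc.comp (continuous_const.prodMk continuous_id).continuousOn
      fun x hx => Set.mk_mem_prod ht₀Icc hx
  obtain ⟨z, hzmem, hzmin⟩ := isCompact_Icc.exists_isMinOn (Set.nonempty_Icc.2 hap.le) hφc
  have hεpos : 0 < Kmat t₀ z * pf z * (u a / 2) :=
    mul_pos (mul_pos (hKpos t₀ ht₀Icc z hzmem) (hppos z hzmem)) (by linarith)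
  have hgint : IntegrableOn (fun a' => Kmat t₀ a' * pf a' * u a') (Set.Ioc 0 ap) :=
    ((hφc.mul huc).integrableOn_compact isCompact_Icc).mono_set hIocIcc
  have h1 : (∫ a' in Set.Icc (a - η) a, Kmat t₀ a' * pf a' * u a') ≤ lam t₀ := by
    simp only [hlamdef]
    refine setIntegral_mono_set hgint ?_ hIsub.eventuallyLE
    refine (ae_restrict_iff' measurableSet_Ioc).2 (Eventually.of_forall fun x hx => ?_)
    exact mul_nonneg (mul_nonneg (hKpos t₀ ht₀Icc x (hIocIcc hx)).le
      (hppos x (hIocIcc hx)).le) (hbd x (hIocIcc hx)).1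
  have h2 : Kmat t₀ z * pf z * (u a / 2) * η ≤
      ∫ a' in Set.Icc (a - η) a, Kmat t₀ a' * pf a' * u a' := by
    have hconst : (∫ _ in Set.Icc (a - η) a, Kmat t₀ z * pf z * (u a / 2)) =
        Kmat t₀ z * pf z * (u a / 2) * η := by
      rw [setIntegral_const, Real.volume_real_Icc_of_le (by linarith), smul_eq_mul]
      ring
    rw [← hconst]
    refine setIntegral_mono_on (integrableOn_const (by simp [Real.volume_Icc]))
      (hgint.mono_set hIsub) measurableSet_Icc ?_
    intro x hx
    have hxIcc : x ∈ Set.Icc 0 ap := hIocIcc (hIsub hx)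
    have hφ : Kmat t₀ z * pf z ≤ Kmat t₀ x * pf x := isMinOn_iff.1 hzmin x hxIcc
    have hux : u a / 2 ≤ u x := hul x hx
    exact mul_le_mul hφ hux (by linarith) (mul_nonneg (hKpos t₀ ht₀Icc x hxIcc).le
      (hppos x hxIcc).le)
  have : 0 < lam t₀ := lt_of_lt_of_le (mul_pos hεpos hηpos) (h2.trans h1)
  linarith
end

section
/- Let J be continuous, nonnegative, with ∫ J = 1 and J(0) > 0, and let T be the convolution operator (Tφ)(x) = ∫ J(x−y) φ(y) dy on C_b(ℝ). If u ∈ C_b(ℝ) is nonnegative, u ≢ 0, then for every t > 0 and every x ∈ ℝ, (e^{tT} u)(x) = Σ_{n=0}^∞ (tⁿ/n!) (J^{*n} ∗ u)(x) > 0. -/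
open MeasureTheory Filter Set

/-- One convolution step with the kernel `J`. -/
noncomputable def convStep (J : ℝ → ℝ) (v : ℝ → ℝ) : ℝ → ℝ :=
  fun x => ∫ y, J (x - y) * v y

theorem stmt_13 (J : ℝ → ℝ) (hJc : Continuous J) (hJnn : ∀ x, 0 ≤ J x)
    (hJint : ∫ x, J x = 1) (hJ0 : 0 < J 0)
    (u : ℝ → ℝ) (huc : Continuous u) (hub : ∃ C : ℝ, ∀ x, |u x| ≤ C)
    (hunn : ∀ x, 0 ≤ u x) (hune : ∃ x, u x ≠ 0)
    (t : ℝ) (ht : 0 < t) :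
    ∀ x : ℝ, 0 < ∑' n : ℕ, (t ^ n / (Nat.factorial n : ℝ)) * (convStep J)^[n] u x := by
  obtain ⟨C, hC⟩ := hub
  obtain ⟨x₀, hx₀⟩ := hune
  have hx₀' : 0 < u x₀ := lt_of_le_of_ne (hunn x₀) (Ne.symm hx₀)
  have hC0 : 0 ≤ C := le_trans (abs_nonneg _) (hC x₀)
  -- J is integrable
  have hJi : Integrable J := by
    by_contra h
    rw [integral_undef h] at hJint
    norm_num at hJint
  -- J ≥ c on closedBall 0 δ
  obtain ⟨δ, hδ, hJδ⟩ : ∃ δ > 0, ∀ z, |z| ≤ δ → J 0 / 2 ≤ J z := by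
    have : {z : ℝ | J 0 / 2 < J z} ∈ nhds (0 : ℝ) :=
      (isOpen_lt continuous_const hJc).mem_nhds (by simpa using half_lt_self hJ0)
    obtain ⟨δ, hδ, hball⟩ := Metric.mem_nhds_iff.1 this
    refine ⟨δ / 2, half_pos hδ, fun z hz => ?_⟩
    exact le_of_lt (hball (by simp only [Metric.mem_ball, Real.dist_eq, sub_zero]; linarith))
  set c : ℝ := J 0 / 2 with hc
  have hc0 : 0 < c := half_pos hJ0
  -- u ≥ b on closedBall x₀ ε
  obtain ⟨ε, hε, huε⟩ : ∃ ε > 0, ∀ y, |y - x₀| ≤ ε → u x₀ / 2 ≤ u y := by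
    have : {y : ℝ | u x₀ / 2 < u y} ∈ nhds x₀ :=
      (isOpen_lt continuous_const huc).mem_nhds (by simpa using half_lt_self hx₀')
    obtain ⟨ε, hε, hball⟩ := Metric.mem_nhds_iff.1 this
    refine ⟨ε / 2, half_pos hε, fun y hy => ?_⟩
    exact le_of_lt (hball (by simp only [Metric.mem_ball, Real.dist_eq]; linarith))
  set b : ℝ := u x₀ / 2 with hb
  have hb0 : 0 < b := half_pos hx₀'
  set L : ℝ := min ε (δ / 2) with hL
  have hL0 : 0 < L := lt_min hε (by linarith)
  -- basic properties of iterates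
  set v : ℕ → ℝ → ℝ := fun n => (convStep J)^[n] u with hv
  have hv0 : v 0 = u := rfl
  have hvsucc : ∀ n, v (n + 1) = convStep J (v n) := by
    intro n
    show (convStep J)^[n + 1] u = convStep J ((convStep J)^[n] u)
    rw [Function.iterate_succ_apply']
  -- integrability helper
  have hint : ∀ (x : ℝ) (w : ℝ → ℝ), Continuous w → (∀ y, |w y| ≤ C) →
      Integrable (fun y => J (x - y) * w y) := by
    intro x w hwc hwb
    have h1 : Integrable (fun y => J (x - y)) := hJi.comp_sub_left x
    exact (h1.bdd_mul (c := C) hwc.aestronglyMeasurable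
      (ae_of_all _ fun y => by simpa using hwb y)).congr (ae_of_all _ fun y => mul_comm _ _)
  have hJx : ∀ x : ℝ, (∫ y, J (x - y)) = 1 := by
    intro x
    rw [integral_sub_left_eq_self J volume x]
    exact hJint
  -- induction: continuity, bounds, positivity region
  have key : ∀ n, Continuous (v n) ∧ (∀ x, 0 ≤ v n x) ∧ (∀ x, |v n x| ≤ C) ∧
      (∀ y, |y - x₀| ≤ ε + n * (δ / 2) → b * (c * L) ^ n ≤ v n y) := by
    intro n
    induction n with
    | zero =>
      refine ⟨huc, hunn, hC, fun y hy => ?_⟩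
      simpa [hv0] using huε y (by simpa using hy)
    | succ n ih =>
      obtain ⟨ihc, ihnn, ihb, ihpos⟩ := ih
      have ihb' : ∀ x, v n x ≤ C := fun x => le_trans (le_abs_self _) (ihb x)
      constructor
      · -- continuity via convolution
        have : convStep J (v n) = convolution J (v n) (ContinuousLinearMap.mul ℝ ℝ) volume := by
          funext x
          rw [convolution_def]
          simp only [ContinuousLinearMap.mul_apply']
          exact (integral_sub_left_eq_self (fun y => J (x - y) * v n y) volume x).symm.trans
            (by congr 1; funext y; rw [sub_sub_cancel])
        rw [hvsucc, this]
        apply BddAbove.continuous_convolution_right_of_integrable _ _ hJi ihc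
        refine ⟨C, ?_⟩
        rintro r ⟨x, rfl⟩
        simpa using ihb x
      refine ⟨?_, ?_, ?_⟩
      · -- nonneg
        intro x
        rw [hvsucc]
        exact integral_nonneg fun y => mul_nonneg (hJnn _) (ihnn y)
      · -- bounded
        intro x
        rw [hvsucc]
        show |∫ y, J (x - y) * v n y| ≤ C
        rw [abs_of_nonneg (integral_nonneg fun y => mul_nonneg (hJnn _) (ihnn y))]
        calc (∫ y, J (x - y) * v n y) ≤ ∫ y, J (x - y) * C := by
              apply integral_mono (hint x (v n) ihc ihb)
              · exact (hJi.comp_sub_left x).mul_const C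
              · intro y
                exact mul_le_mul_of_nonneg_left (ihb' y) (hJnn _)
          _ = C := by rw [integral_mul_const, hJx x, one_mul]
      · -- positivity spreading
        intro y hy
        rw [hvsucc]
        show b * (c * L) ^ (n + 1) ≤ ∫ z, J (y - z) * v n z
        set lo : ℝ := max (x₀ - (ε + n * (δ / 2))) (y - δ) with hlo
        set hi : ℝ := min (x₀ + (ε + n * (δ / 2))) (y + δ) with hhi
        have hrn : (0:ℝ) ≤ ε + n * (δ / 2) := by positivity
        have habs : |y - x₀| ≤ ε + n * (δ/2) + δ/2 := by
          have : (n:ℝ) + 1 ≥ 0 := by positivity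
          calc |y - x₀| ≤ ε + (n + 1) * (δ / 2) := by exact_mod_cast hy
            _ = ε + n * (δ/2) + δ/2 := by ring
        have habs' := abs_le.1 habs
        have habs1 : y - x₀ ≤ ε + n * (δ/2) + δ/2 := habs'.2
        have habs2 : x₀ - y ≤ ε + n * (δ/2) + δ/2 := by linarith [habs'.1]
        have hlen : L ≤ hi - lo := by
          have h1 : L ≤ ε := min_le_left _ _
          have h2 : L ≤ δ / 2 := min_le_right _ _
          rw [hhi, hlo]
          rcases le_total (x₀ + (ε + n * (δ / 2))) (y + δ) with h | h <;>
            rcases le_total (x₀ - (ε + n * (δ / 2))) (y - δ) with h' | h' <;>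
            simp only [min_eq_left, min_eq_right, max_eq_left, max_eq_right, *] <;>
            linarith [(Nat.cast_nonneg n : (0:ℝ) ≤ n), min_le_left ε (δ/2), min_le_right ε (δ/2),
              mul_nonneg (Nat.cast_nonneg n : (0:ℝ) ≤ n) (le_of_lt (half_pos hδ))]
        have hS : MeasurableSet (Icc lo hi) := measurableSet_Icc
        have hnn : ∀ z, 0 ≤ J (y - z) * v n z := fun z => mul_nonneg (hJnn _) (ihnn z)
        have hIi : Integrable (fun z => J (y - z) * v n z) := hint y (v n) ihc ihb
        have step1 : (∫ z in Icc lo hi, J (y - z) * v n z) ≤ ∫ z, J (y - z) * v n z :=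
          setIntegral_le_integral hIi (ae_of_all _ hnn)
        have step2 : (c * (b * (c*L)^n)) * (volume (Icc lo hi)).toReal ≤
            ∫ z in Icc lo hi, J (y - z) * v n z := by
          apply setIntegral_ge_of_const_le_real hS (by simp)
          · intro z hz
            obtain ⟨hz1, hz2⟩ := hz
            have hJz : c ≤ J (y - z) := by
              apply hJδ
              rw [abs_le]
              constructor
              · have : hi ≤ y + δ := min_le_right _ _
                linarith
              · have : y - δ ≤ lo := le_max_right _ _
                linarith
            have hvz : b * (c*L)^n ≤ v n z := by
              apply ihpos
              rw [abs_le]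
              constructor
              · have : x₀ - (ε + n * (δ / 2)) ≤ lo := le_max_left _ _
                linarith
              · have : hi ≤ x₀ + (ε + n * (δ / 2)) := min_le_left _ _
                linarith
            have hv0' : 0 ≤ b * (c*L)^n := by positivity
            calc c * (b * (c*L)^n) ≤ J (y - z) * (b * (c*L)^n) :=
                  mul_le_mul_of_nonneg_right hJz hv0'
              _ ≤ J (y - z) * v n z := mul_le_mul_of_nonneg_left hvz (hJnn _)
          · exact hIi.integrableOn
        have hvol : L ≤ (volume (Icc lo hi)).toReal := by
          rw [Real.volume_Icc, ENNReal.toReal_ofReal (by linarith)]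
          exact hlen
        calc b * (c * L) ^ (n + 1) = (c * (b * (c*L)^n)) * L := by ring
          _ ≤ (c * (b * (c*L)^n)) * (volume (Icc lo hi)).toReal :=
              mul_le_mul_of_nonneg_left hvol (by positivity)
          _ ≤ ∫ z in Icc lo hi, J (y - z) * v n z := step2
          _ ≤ _ := step1
  -- conclude
  intro x
  obtain ⟨N, hN⟩ : ∃ N : ℕ, |x - x₀| ≤ ε + N * (δ / 2) := by
    obtain ⟨N, hN⟩ := exists_nat_ge (|x - x₀| / (δ / 2))
    refine ⟨N, ?_⟩
    have : |x - x₀| ≤ N * (δ / 2) := by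
      rw [div_le_iff₀ (by linarith)] at hN
      linarith
    linarith
  have hsum : Summable fun n : ℕ => (t ^ n / (Nat.factorial n : ℝ)) * v n x := by
    refine Summable.of_nonneg_of_le
      (fun n => mul_nonneg (by positivity) ((key n).2.1 x)) (fun n => ?_)
      ((Real.summable_pow_div_factorial t).mul_right C)
    exact mul_le_mul_of_nonneg_left
      (le_trans (le_abs_self _) ((key n).2.2.1 x)) (by positivity)
  apply Summable.tsum_pos hsum (fun n => mul_nonneg (by positivity) ((key n).2.1 x)) N
  apply mul_pos (by positivity)
  exact lt_of_lt_of_le (by positivity) ((key N).2.2.2 x hN)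
end
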